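/- arXiv:1807.04082 — 5 statements merged into one kernel-verified Lean document; each statement's English description precedes it below -/
import Mathlib

section
/- If a and b are elements of a finite ring R with identity that generate the same principal left ideal, then there exists a unit u of R such that u*a = b. -/
set_option linter.unusedSectionVars false
set_option maxHeartbeats 1000000

open Finset

section Aux

variable {R : Type*} [Ring R] [Fintype R] [DecidableEq R]

/-- `Ig c` is the right ideal `cR` as a finset. -/
def Ig (c : R) : Finset R := Finset.image (fun x => c * x) Finset.univ

lemma mem_Ig {c x : R} : x ∈ Ig c ↔ ∃ w, c * w = x := by
  constructor
  · intro hx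
    rcases Finset.mem_image.1 hx with ⟨w, _, hw⟩
    exact ⟨w, hw⟩
  · rintro ⟨w, rfl⟩
    exact Finset.mem_image.2 ⟨w, Finset.mem_univ _, rfl⟩

lemma self_mem_Ig (c : R) : c ∈ Ig c := mem_Ig.2 ⟨1, mul_one c⟩

lemma zero_mem_Ig (c : R) : (0 : R) ∈ Ig c := mem_Ig.2 ⟨0, mul_zero c⟩

lemma mul_right_mem_Ig {c x : R} (r : R) (hx : x ∈ Ig c) : x * r ∈ Ig c := by
  rcases mem_Ig.1 hx with ⟨w, rfl⟩
  exact mem_Ig.2 ⟨w * r, (mul_assoc _ _ _).symm⟩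

lemma add_mem_Ig {c x y : R} (hx : x ∈ Ig c) (hy : y ∈ Ig c) : x + y ∈ Ig c := by
  rcases mem_Ig.1 hx with ⟨w, rfl⟩
  rcases mem_Ig.1 hy with ⟨v, rfl⟩
  exact mem_Ig.2 ⟨w + v, by rw [mul_add]⟩

lemma Ig_subset {c m : R} (hm : m ∈ Ig c) : Ig m ⊆ Ig c := by
  intro x hx
  rcases mem_Ig.1 hx with ⟨w, rfl⟩
  exact mul_right_mem_Ig w hm

lemma mem_Ig_idem {e x : R} (he : e * e = e) (hx : x ∈ Ig e) : e * x = x := by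
  rcases mem_Ig.1 hx with ⟨w, rfl⟩
  rw [← mul_assoc, he]

end Aux

section Count

variable {R : Type*} [Ring R] [Fintype R] [DecidableEq R]

/-- number of `m` with `m*e = 0` generating the right ideal `D`. -/
def gcount (e : R) (D : Finset R) : ℕ :=
  (Finset.univ.filter (fun m : R => m * e = 0 ∧ Ig m = D)).card

variable {e f p q : R}

lemma idem_e (hqp : q * p = e) (hpq : p * q = f) (hpe : p * e = p) (hqf : q * f = q) :
    e * e = e := by
  rw [← hqp]
  calc q * p * (q * p) = q * (p * q) * p := by noncomm_ring
  _ = q * f * p := by rw [hpq]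
  _ = q * p := by rw [hqf]

lemma idem_f (hqp : q * p = e) (hpq : p * q = f) (hpe : p * e = p) (hqf : q * f = q) :
    f * f = f := by
  rw [← hpq]
  calc p * q * (p * q) = p * (q * p) * q := by noncomm_ring
  _ = p * e * q := by rw [hqp]
  _ = p * q := by rw [hpe]

/-- cardinality of `Ye` equals that of `Yf`, for `Y = cR`. -/
lemma cardA (hqp : q * p = e) (hpq : p * q = f) (hpe : p * e = p) (hqf : q * f = q) (c : R) :
    ((Ig c).filter (fun y => y * e = y)).card = ((Ig c).filter (fun y => y * f = y)).card := by
  refine Finset.card_bij' (fun y _ => y * q) (fun z _ => z * p) ?_ ?_ ?_ ?_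
  · intro y hy
    rcases Finset.mem_filter.1 hy with ⟨hy1, hy2⟩
    refine Finset.mem_filter.2 ⟨mul_right_mem_Ig q hy1, ?_⟩
    show y * q * f = y * q
    rw [mul_assoc, hqf]
  · intro z hz
    rcases Finset.mem_filter.1 hz with ⟨hz1, hz2⟩
    refine Finset.mem_filter.2 ⟨mul_right_mem_Ig p hz1, ?_⟩
    show z * p * e = z * p
    rw [mul_assoc, hpe]
  · intro y hy
    rcases Finset.mem_filter.1 hy with ⟨_, hy2⟩
    show y * q * p = y
    rw [mul_assoc, hqp, hy2]
  · intro z hz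
    rcases Finset.mem_filter.1 hz with ⟨_, hz2⟩
    show z * p * q = z
    rw [mul_assoc, hpq, hz2]

/-- `|cR| = |cRe| * |{m ∈ cR : me = 0}|`. -/
lemma cardC (he : e * e = e) (c : R) :
    (Ig c).card =
      ((Ig c).filter (fun y => y * e = y)).card * ((Ig c).filter (fun m => m * e = 0)).card := by
  rw [← Finset.card_product]
  refine Finset.card_bij' (fun y _ => (y * e, y - y * e)) (fun z _ => z.1 + z.2) ?_ ?_ ?_ ?_
  · intro y hy
    refine Finset.mem_product.2 ⟨Finset.mem_filter.2 ⟨mul_right_mem_Ig e hy, ?_⟩,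
      Finset.mem_filter.2 ⟨?_, ?_⟩⟩
    · show y * e * e = y * e
      rw [mul_assoc, he]
    · show y - y * e ∈ Ig c
      have h1 : y - y * e = y * (1 - e) := by noncomm_ring
      rw [h1]
      exact mul_right_mem_Ig _ hy
    · show (y - y * e) * e = 0
      rw [sub_mul, mul_assoc, he, sub_self]
  · intro z hz
    rcases Finset.mem_product.1 hz with ⟨h1, h2⟩
    exact add_mem_Ig (Finset.mem_filter.1 h1).1 (Finset.mem_filter.1 h2).1
  · intro y hy
    show y * e + (y - y * e) = y
    abel
  · intro z hz
    rcases Finset.mem_product.1 hz with ⟨h1, h2⟩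
    have e1 : z.1 * e = z.1 := (Finset.mem_filter.1 h1).2
    have e2 : z.2 * e = 0 := (Finset.mem_filter.1 h2).2
    show ((z.1 + z.2) * e, (z.1 + z.2) - (z.1 + z.2) * e) = z
    have h1 : (z.1 + z.2) * e = z.1 := by rw [add_mul, e1, e2, add_zero]
    rw [h1]
    ext <;> simp

lemma cardS (hqp : q * p = e) (hpq : p * q = f) (hpe : p * e = p) (hqf : q * f = q) (c : R) :
    ((Ig c).filter (fun m => m * e = 0)).card = ((Ig c).filter (fun m => m * f = 0)).card := by
  have he := idem_e hqp hpq hpe hqf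
  have hf := idem_f hqp hpq hpe hqf
  have h1 := cardC he c
  have h2 := cardC hf c
  have h3 := cardA hqp hpq hpe hqf c
  rw [h3] at h1
  have hpos : 0 < ((Ig c).filter (fun y => y * f = y)).card :=
    Finset.card_pos.2 ⟨0, Finset.mem_filter.2 ⟨zero_mem_Ig c, by simp⟩⟩
  exact Nat.eq_of_mul_eq_mul_left hpos (h1.symm.trans h2)

/-- fiberwise partition of `{m ∈ cR : me = 0}` by the right ideal generated. -/
lemma cardPart (e c : R) :
    ((Ig c).filter (fun m => m * e = 0)).card = ∑ D ∈ (Ig c).powerset, gcount e D := by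
  rw [Finset.card_eq_sum_card_fiberwise
    (f := fun m => Ig m) (t := (Ig c).powerset)
    (fun m hm => Finset.mem_powerset.2 (Ig_subset (Finset.mem_filter.1 hm).1))]
  refine Finset.sum_congr rfl ?_
  intro D hD
  congr 1
  ext m
  simp only [Finset.mem_filter, Finset.mem_univ, true_and, gcount]
  constructor
  · rintro ⟨⟨_, h2⟩, h3⟩
    exact ⟨h2, h3⟩
  · rintro ⟨h2, h3⟩
    exact ⟨⟨(Finset.mem_powerset.1 hD) (h3 ▸ self_mem_Ig m), h2⟩, h3⟩

lemma gcount_eq (hqp : q * p = e) (hpq : p * q = f) (hpe : p * e = p) (hqf : q * f = q) :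
    ∀ D : Finset R, gcount e D = gcount f D := by
  intro D
  induction D using Finset.strongInduction with
  | _ D ih =>
    by_cases hD : ∃ c : R, Ig c = D
    · obtain ⟨c, rfl⟩ := hD
      have h1 := cardPart e c
      have h2 := cardPart f c
      have hs := cardS hqp hpq hpe hqf c
      rw [h1, h2] at hs
      have hmem : Ig c ∈ (Ig c).powerset := Finset.mem_powerset.2 (Finset.Subset.refl _)
      rw [← Finset.add_sum_erase _ _ hmem, ← Finset.add_sum_erase _ _ hmem] at hs
      have herase : ∑ D' ∈ ((Ig c).powerset.erase (Ig c)), gcount e D'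
          = ∑ D' ∈ ((Ig c).powerset.erase (Ig c)), gcount f D' := by
        refine Finset.sum_congr rfl ?_
        intro D' hD'
        rcases Finset.mem_erase.1 hD' with ⟨hne, hsub⟩
        exact ih D' (lt_of_le_of_ne (Finset.mem_powerset.1 hsub) hne)
      omega
    · have h1 : gcount e D = 0 := by
        rw [gcount, Finset.card_eq_zero]
        refine Finset.filter_eq_empty_iff.2 ?_
        intro m _
        rintro ⟨_, hIm⟩
        exact hD ⟨m, hIm⟩
      have h2 : gcount f D = 0 := by
        rw [gcount, Finset.card_eq_zero]
        refine Finset.filter_eq_empty_iff.2 ?_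
        intro m _
        rintro ⟨_, hIm⟩
        exact hD ⟨m, hIm⟩
      rw [h1, h2]

/-- `|eR| = |fR|`. -/
lemma cardL (hqp : q * p = e) (hpq : p * q = f) (hpe : p * e = p) (hfp : f * p = p)
    (heq : e * q = q) (hqf : q * f = q) :
    (Ig e).card = (Ig f).card := by
  have he := idem_e hqp hpq hpe hqf
  have hf := idem_f hqp hpq hpe hqf
  refine Finset.card_bij' (fun x _ => p * x) (fun z _ => q * z) ?_ ?_ ?_ ?_
  · intro x hx
    refine mem_Ig.2 ⟨p * x, ?_⟩
    show f * (p * x) = p * x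
    rw [← mul_assoc, hfp]
  · intro z hz
    refine mem_Ig.2 ⟨q * z, ?_⟩
    show e * (q * z) = q * z
    rw [← mul_assoc, heq]
  · intro x hx
    show q * (p * x) = x
    rw [← mul_assoc, hqp, mem_Ig_idem he hx]
  · intro z hz
    show p * (q * z) = z
    rw [← mul_assoc, hpq, mem_Ig_idem hf hz]

/-- `|R| = |eR| * |{x : ex = 0}|`. -/
lemma cardU (he : e * e = e) :
    (Finset.univ : Finset R).card =
      (Ig e).card * (Finset.univ.filter (fun x : R => e * x = 0)).card := by
  rw [← Finset.card_product]
  refine Finset.card_bij' (fun x _ => (e * x, x - e * x)) (fun z _ => z.1 + z.2) ?_ ?_ ?_ ?_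
  · intro x _
    refine Finset.mem_product.2 ⟨mem_Ig.2 ⟨x, rfl⟩, Finset.mem_filter.2 ⟨Finset.mem_univ _, ?_⟩⟩
    show e * (x - e * x) = 0
    rw [mul_sub, ← mul_assoc, he, sub_self]
  · intro z _
    exact Finset.mem_univ _
  · intro x _
    show e * x + (x - e * x) = x
    abel
  · intro z hz
    rcases Finset.mem_product.1 hz with ⟨h1, h2⟩
    have e1 : e * z.1 = z.1 := mem_Ig_idem he h1
    have e2 : e * z.2 = 0 := (Finset.mem_filter.1 h2).2
    show (e * (z.1 + z.2), (z.1 + z.2) - e * (z.1 + z.2)) = z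
    have h1 : e * (z.1 + z.2) = z.1 := by rw [mul_add, e1, e2, add_zero]
    rw [h1]
    ext <;> simp

lemma cardT (hqp : q * p = e) (hpq : p * q = f) (hpe : p * e = p) (hfp : f * p = p)
    (heq : e * q = q) (hqf : q * f = q) :
    (Finset.univ.filter (fun x : R => e * x = 0)).card
      = (Finset.univ.filter (fun x : R => f * x = 0)).card := by
  have he := idem_e hqp hpq hpe hqf
  have hf := idem_f hqp hpq hpe hqf
  have h1 := cardU he
  have h2 := cardU hf
  have h3 := cardL hqp hpq hpe hfp heq hqf
  rw [h3] at h1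
  have hpos : 0 < (Ig f).card := Finset.card_pos.2 ⟨0, zero_mem_Ig f⟩
  exact Nat.eq_of_mul_eq_mul_left hpos (h1.symm.trans h2)

end Count

section Pow

lemma idem_pow {M : Type*} [Monoid M] {y : M} (hy : y * y = y) :
    ∀ n, 1 ≤ n → y ^ n = y := by
  intro n hn
  induction n with
  | zero => omega
  | succ m ih =>
    by_cases hm : m = 0
    · subst hm; simp
    · rw [pow_succ, ih (by omega), hy]

lemma exists_idem_pow {M : Type*} [Monoid M] [Finite M] (x : M) :
    ∃ k, 1 ≤ k ∧ x ^ k * x ^ k = x ^ k := by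
  obtain ⟨i, j, hij, hx⟩ : ∃ i j : ℕ, i < j ∧ x ^ (i + 1) = x ^ (j + 1) := by
    obtain ⟨i, j, hne, hx⟩ := Finite.exists_ne_map_eq_of_infinite (fun n : ℕ => x ^ (n + 1))
    rcases lt_or_gt_of_ne hne with hlt | hlt
    · exact ⟨i, j, hlt, hx⟩
    · exact ⟨j, i, hlt, hx.symm⟩
  have hd1 : 1 ≤ j - i := by omega
  have hstep : ∀ n, i + 1 ≤ n → x ^ (n + (j - i)) = x ^ n := by
    intro n hn
    have h1 : n + (j - i) = (n - (i + 1)) + (j + 1) := by omega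
    have h2 : n = (n - (i + 1)) + (i + 1) := by omega
    rw [h1, pow_add, ← hx, ← pow_add, ← h2]
  have hrep : ∀ m n, i + 1 ≤ n → x ^ (n + m * (j - i)) = x ^ n := by
    intro m
    induction m with
    | zero => intro n hn; simp
    | succ m ih =>
      intro n hn
      have h1 : n + (m + 1) * (j - i) = (n + (j - i)) + m * (j - i) := by ring
      rw [h1, ih _ (by omega), hstep n hn]
  refine ⟨(i + 1) * (j - i), Nat.one_le_iff_ne_zero.2 (by positivity), ?_⟩
  rw [← pow_add]
  exact hrep (i + 1) ((i + 1) * (j - i)) (Nat.le_mul_of_pos_right _ (by omega))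

end Pow

/-- If `a` and `b` generate the same principal left ideal of a finite ring `R` with identity,
then there exists a unit `u` of `R` with `u * a = b`. -/
theorem exists_unit_mul_eq_of_principal_left_ideal_eq (R : Type*) [Ring R] [Fintype R]
    (a b : R) (h : Set.range (fun r : R => r * a) = Set.range (fun r : R => r * b)) :
    ∃ u : Rˣ, (u : R) * a = b := by
  classical
  -- extract r, s
  obtain ⟨r, hr⟩ : ∃ r : R, r * a = b := by
    have : b ∈ Set.range (fun r : R => r * b) := ⟨1, one_mul b⟩
    rw [← h] at this
    exact this
  obtain ⟨s, hs⟩ : ∃ s : R, s * b = a := by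
    have : a ∈ Set.range (fun r : R => r * a) := ⟨1, one_mul a⟩
    rw [h] at this
    exact this
  have hsra : (s * r) * a = a := by rw [mul_assoc, hr, hs]
  have powfix : ∀ n : ℕ, (s * r) ^ n * a = a := by
    intro n
    induction n with
    | zero => simp
    | succ n ih => rw [pow_succ, mul_assoc, hsra, ih]
  have conv1 : ∀ n : ℕ, r * (s * r) ^ n = (r * s) ^ n * r := by
    intro n
    induction n with
    | zero => simp
    | succ n ih =>
      rw [pow_succ, pow_succ, ← mul_assoc, ih, mul_assoc, ← mul_assoc r s r, ← mul_assoc]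
  have conv2 : ∀ n : ℕ, (s * r) ^ n * s = s * (r * s) ^ n := by
    intro n
    induction n with
    | zero => simp
    | succ n ih =>
      calc (s * r) ^ (n + 1) * s = (s * r) ^ n * (s * (r * s)) := by
            rw [pow_succ, mul_assoc, mul_assoc s r s]
        _ = ((s * r) ^ n * s) * (r * s) := by rw [← mul_assoc]
        _ = (s * (r * s) ^ n) * (r * s) := by rw [ih]
        _ = s * (r * s) ^ (n + 1) := by rw [mul_assoc, ← pow_succ]
  obtain ⟨k1, hk11, hk1⟩ := exists_idem_pow (s * r)
  obtain ⟨k2, hk21, hk2⟩ := exists_idem_pow (r * s)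
  set k := k1 * k2 with hkdef
  have hk : 1 ≤ k := Nat.mul_pos hk11 hk21
  have hk1idem : (s * r) ^ k1 * (s * r) ^ k1 = (s * r) ^ k1 := hk1
  have hk2idem : (r * s) ^ k2 * (r * s) ^ k2 = (r * s) ^ k2 := hk2
  have hk1i : ((s * r) ^ k1) * ((s * r) ^ k1) = (s * r) ^ k1 := hk1
  have hbase_e : ∀ n, 1 ≤ n → (s * r) ^ (n * k) = (s * r) ^ k1 := by
    intro n hn
    have h1 : n * k = k1 * (n * k2) := by rw [hkdef]; ring
    rw [h1, pow_mul]
    exact idem_pow hk1i (n * k2) (Nat.mul_pos hn hk21)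
  have hbase_f : ∀ n, 1 ≤ n → (r * s) ^ (n * k) = (r * s) ^ k2 := by
    intro n hn
    have h1 : n * k = k2 * (n * k1) := by rw [hkdef]; ring
    rw [h1, pow_mul]
    exact idem_pow hk2idem (n * k1) (Nat.mul_pos hn hk11)
  have hek : ∀ n, 1 ≤ n → (s * r) ^ (n * k) = (s * r) ^ k := by
    intro n hn
    rw [hbase_e n hn, ← hbase_e 1 le_rfl, one_mul]
  have hfk : ∀ n, 1 ≤ n → (r * s) ^ (n * k) = (r * s) ^ k := by
    intro n hn
    rw [hbase_f n hn, ← hbase_f 1 le_rfl, one_mul]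
  set e := (s * r) ^ k with hedef
  set f := (r * s) ^ k with hfdef
  set p := r * (s * r) ^ k with hpdef
  set q := (s * r) ^ (2 * k - 1) * s with hqdef
  have he : e * e = e := by
    rw [hedef, ← pow_add, show k + k = 2 * k by ring]
    exact hek 2 (by omega)
  have hqp : q * p = e := by
    rw [hqdef, hpdef, hedef]
    calc ((s * r) ^ (2 * k - 1) * s) * (r * (s * r) ^ k)
        = (s * r) ^ (2 * k - 1) * ((s * r) * (s * r) ^ k) := by
          rw [mul_assoc, ← mul_assoc s r _]
      _ = (s * r) ^ (2 * k - 1) * (s * r) ^ (k + 1) := by rw [← pow_succ']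
      _ = (s * r) ^ (3 * k) := by rw [← pow_add, show 2 * k - 1 + (k + 1) = 3 * k by omega]
      _ = (s * r) ^ k := by rw [show 3 * k = 3 * k from rfl, hek 3 (by omega)]
  have hpq : p * q = f := by
    rw [hqdef, hpdef, hfdef]
    calc (r * (s * r) ^ k) * ((s * r) ^ (2 * k - 1) * s)
        = r * ((s * r) ^ k * (s * r) ^ (2 * k - 1) * s) := by
          rw [mul_assoc, mul_assoc]
      _ = r * ((s * r) ^ (3 * k - 1) * s) := by
          rw [← pow_add, show k + (2 * k - 1) = 3 * k - 1 by omega]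
      _ = (r * (s * r) ^ (3 * k - 1)) * s := by rw [mul_assoc]
      _ = ((r * s) ^ (3 * k - 1) * r) * s := by rw [conv1]
      _ = (r * s) ^ (3 * k - 1) * (r * s) := by rw [mul_assoc]
      _ = (r * s) ^ (3 * k) := by rw [← pow_succ, show 3 * k - 1 + 1 = 3 * k by omega]
      _ = (r * s) ^ k := hfk 3 (by omega)
  have hpe : p * e = p := by
    rw [hpdef, hedef, mul_assoc, ← pow_add, show k + k = 2 * k by ring, hek 2 (by omega)]
  have hfp : f * p = p := by
    rw [hpdef, hfdef, ← mul_assoc, ← conv1, mul_assoc, ← pow_add,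
      show k + k = 2 * k by ring, hek 2 (by omega)]
  have h31 : (s * r) ^ (3 * k - 1) = (s * r) ^ (2 * k - 1) := by
    rw [show 3 * k - 1 = (k - 1) + 2 * k by omega, pow_add, hek 2 (by omega), ← pow_add,
      show k - 1 + k = 2 * k - 1 by omega]
  have heq : e * q = q := by
    rw [hqdef, hedef, ← mul_assoc, ← pow_add, show k + (2 * k - 1) = 3 * k - 1 by omega, h31]
  have hqf : q * f = q := by
    rw [hqdef, hfdef, mul_assoc, ← conv2, ← mul_assoc, ← pow_add,
      show 2 * k - 1 + k = 3 * k - 1 by omega, h31]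
  have hf : f * f = f := idem_f hqp hpq hpe hqf
  have hea : e * a = a := powfix k
  have hpa : p * a = b := by rw [hpdef, mul_assoc, powfix k, hr]
  -- counting: find m with m*e = 0 and Ig m = Ig (1-f)
  have hgf : 0 < gcount f (Ig (1 - f)) := by
    refine Finset.card_pos.2 ⟨1 - f, Finset.mem_filter.2 ⟨Finset.mem_univ _, ?_, rfl⟩⟩
    rw [sub_mul, one_mul, hf, sub_self]
  have hge : 0 < gcount e (Ig (1 - f)) := by
    rw [gcount_eq hqp hpq hpe hqf (Ig (1 - f))]
    exact hgf
  obtain ⟨m, hm⟩ := Finset.card_pos.1 hge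
  rcases Finset.mem_filter.1 hm with ⟨-, hme, hIm⟩
  have hfm : f * m = 0 := by
    obtain ⟨w, hw⟩ := mem_Ig.1 (hIm ▸ self_mem_Ig m)
    rw [← hw, ← mul_assoc, mul_sub, mul_one, hf, sub_self, zero_mul]
  -- the map z ↦ m*z : T_e → T_f is surjective, hence injective
  have himg : (Finset.univ.filter (fun x : R => e * x = 0)).image (fun z => m * z)
      = Finset.univ.filter (fun x : R => f * x = 0) := by
    ext w
    simp only [Finset.mem_image, Finset.mem_filter, Finset.mem_univ, true_and]
    constructor
    · rintro ⟨z, hz, rfl⟩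
      rw [← mul_assoc, hfm, zero_mul]
    · intro hw
      have hw1 : w ∈ Ig m := by
        rw [hIm]
        refine mem_Ig.2 ⟨w, ?_⟩
        rw [sub_mul, one_mul, hw, sub_zero]
      obtain ⟨x, hx⟩ := mem_Ig.1 hw1
      refine ⟨x - e * x, ?_, ?_⟩
      · rw [mul_sub, ← mul_assoc, he, sub_self]
      · rw [mul_sub, ← mul_assoc, hme, zero_mul, sub_zero, hx]
  have hinj : Set.InjOn (fun z => m * z)
      (Finset.univ.filter (fun x : R => e * x = 0) : Finset R) := by
    refine Finset.injOn_of_card_image_eq ?_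
    rw [himg, cardT hqp hpq hpe hfp heq hqf]
  obtain ⟨y, hy⟩ : ∃ y : R, m * y = 1 - f := by
    refine mem_Ig.1 ?_
    rw [hIm]
    exact self_mem_Ig _
  -- key identity: (1-e)*(y*m) = 1-e
  have hkey : (1 - e) * (y * m) = 1 - e := by
    have hz1 : (1 - e) * (y * m) ∈ (Finset.univ.filter (fun x : R => e * x = 0) : Finset R) := by
      refine Finset.mem_coe.2 (Finset.mem_filter.2 ⟨Finset.mem_univ _, ?_⟩)
      rw [← mul_assoc, mul_sub, mul_one, he, sub_self, zero_mul]
    have hz2 : (1 - e) ∈ (Finset.univ.filter (fun x : R => e * x = 0) : Finset R) := by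
      refine Finset.mem_coe.2 (Finset.mem_filter.2 ⟨Finset.mem_univ _, ?_⟩)
      rw [mul_sub, mul_one, he, sub_self]
    refine hinj hz1 hz2 ?_
    show m * ((1 - e) * (y * m)) = m * (1 - e)
    have hm1e : m * (1 - e) = m := by rw [mul_sub, mul_one, hme, sub_zero]
    rw [← mul_assoc m (1 - e) (y * m), hm1e, ← mul_assoc m y m, hy, sub_mul, one_mul,
      hfm, sub_zero]
  -- assemble the unit
  have h1 : p * (1 - e) = 0 := by rw [mul_sub, mul_one, hpe, sub_self]
  have h2 : m * q = 0 := by rw [← heq, ← mul_assoc, hme, zero_mul]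
  have h3 : m * (1 - e) = m := by rw [mul_sub, mul_one, hme, sub_zero]
  have h4 : (1 - f) * (1 - f) = 1 - f := by
    rw [sub_mul, one_mul, mul_sub, mul_one, hf, sub_self, sub_zero]
  have ha1 : p * ((1 - e) * y * (1 - f)) = 0 := by
    rw [← mul_assoc, ← mul_assoc, h1, zero_mul, zero_mul]
  have ha2 : m * ((1 - e) * y * (1 - f)) = 1 - f := by
    rw [← mul_assoc, ← mul_assoc, h3, hy, h4]
  have hb0 : (1 - f) * p = 0 := by rw [sub_mul, one_mul, hfp, sub_self]
  have hb1 : ((1 - e) * y * (1 - f)) * p = 0 := by rw [mul_assoc, hb0, mul_zero]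
  have hfm' : (1 - f) * m = m := by rw [sub_mul, one_mul, hfm, sub_zero]
  have hb2 : ((1 - e) * y * (1 - f)) * m = 1 - e := by
    rw [mul_assoc, hfm', mul_assoc, hkey]
  have hb3 : q * m = 0 := by rw [← hqf, mul_assoc, hfm, mul_zero]
  have huv : (p + m) * (q + (1 - e) * y * (1 - f)) = 1 := by
    rw [add_mul, mul_add, mul_add, hpq, ha1, h2, ha2]
    abel
  have hvu : (q + (1 - e) * y * (1 - f)) * (p + m) = 1 := by
    rw [add_mul, mul_add, mul_add, hqp, hb3, hb1, hb2]
    abel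
  refine ⟨⟨p + m, q + (1 - e) * y * (1 - f), huv, hvu⟩, ?_⟩
  show (p + m) * a = b
  have hma : m * a = 0 := by rw [← hea, ← mul_assoc, hme, zero_mul]
  rw [add_mul, hpa, hma, add_zero]
end

section
/- For a finite ring R with identity and a ∈ R, the group of units U_R acts transitively on the set S_a of generators of the principal left ideal I_a by left multiplication, and the map u ↦ u*a induces a U_R-equivariant bijection between the left cosets U_R/LStab(a) and S_a, where LStab(a) = {u ∈ U_R : u*a = a}. -/
open Function MulOpposite

namespace UnitsGenAux

universe u v

section Counting

variable {A : Type v} [Ring A]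


noncomputable def kerFiberEquiv (X Y : Type u) [AddCommGroup X] [Module A X]
    [AddCommGroup Y] [Module A Y] (N : Submodule A X) :
    {f : X →ₗ[A] Y // LinearMap.ker f = N} ≃ {g : (X ⧸ N) →ₗ[A] Y // Injective g} where
  toFun f := ⟨N.liftQ f.1 (le_of_eq f.2.symm), by
    rw [← LinearMap.ker_eq_bot]
    exact Submodule.ker_liftQ_eq_bot' _ _ f.2.symm⟩
  invFun g := ⟨g.1 ∘ₗ N.mkQ, by
    rw [LinearMap.ker_comp, LinearMap.ker_eq_bot.2 g.2, Submodule.comap_bot, Submodule.ker_mkQ]⟩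
  left_inv f := Subtype.ext (Submodule.liftQ_mkQ _ _ _)
  right_inv g := Subtype.ext (Submodule.linearMap_qext _ (Submodule.liftQ_mkQ _ _ _))

lemma finite_linearMap (X Y : Type u) [AddCommGroup X] [Module A X]
    [AddCommGroup Y] [Module A Y] [Finite X] [Finite Y] : Finite (X →ₗ[A] Y) :=
  Finite.of_injective (fun f => (f : X → Y)) DFunLike.coe_injective

/-- Partition linear maps by their kernel. -/
noncomputable def homSigmaEquiv (X Y : Type u) [AddCommGroup X] [Module A X]
    [AddCommGroup Y] [Module A Y] :
    (X →ₗ[A] Y) ≃ Σ N : Submodule A X, {g : (X ⧸ N) →ₗ[A] Y // Injective g} :=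
  (Equiv.sigmaFiberEquiv (fun f : X →ₗ[A] Y => LinearMap.ker f)).symm.trans
    (Equiv.sigmaCongrRight fun N => kerFiberEquiv X Y N)

/-- transport injective-map counts along an equivalence of sources -/
def injCongr {X X' Y : Type u} [AddCommGroup X] [Module A X] [AddCommGroup X'] [Module A X']
    [AddCommGroup Y] [Module A Y] (e : X ≃ₗ[A] X') :
    {g : X →ₗ[A] Y // Injective g} ≃ {g : X' →ₗ[A] Y // Injective g} where
  toFun g := ⟨g.1 ∘ₗ (e.symm : X' →ₗ[A] X), g.2.comp e.symm.injective⟩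
  invFun g := ⟨g.1 ∘ₗ (e : X →ₗ[A] X'), g.2.comp e.injective⟩
  left_inv g := Subtype.ext (by ext x; simp)
  right_inv g := Subtype.ext (by ext x; simp)

lemma card_quot_lt (X : Type u) [AddCommGroup X] [Module A X] [Finite X]
    {N : Submodule A X} (hN : N ≠ ⊥) : Nat.card (X ⧸ N) < Nat.card X := by
  obtain ⟨x, hxN, hx0⟩ := (Submodule.ne_bot_iff N).1 hN
  classical
  letI := Fintype.ofFinite X
  letI := Fintype.ofFinite (X ⧸ N)
  rw [Nat.card_eq_fintype_card, Nat.card_eq_fintype_card]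
  refine Fintype.card_lt_of_surjective_not_injective _ N.mkQ_surjective fun hinj => hx0 ?_
  have : N.mkQ x = N.mkQ 0 := by
    simp [Submodule.Quotient.mk_eq_zero, hxN, Submodule.mkQ_apply]
  exact hinj this

lemma nat_card_sigma {ι : Type*} [Fintype ι] (f : ι → Type*) [∀ i, Finite (f i)] :
    Nat.card (Σ i, f i) = ∑ i, Nat.card (f i) := by
  classical
  letI : ∀ i, Fintype (f i) := fun i => Fintype.ofFinite _
  simp [Nat.card_eq_fintype_card]

lemma inj_card_eq (B C : Type u) [AddCommGroup B] [Module A B] [Finite B]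
    [AddCommGroup C] [Module A C] [Finite C]
    (hHom : ∀ (X : Type u) [AddCommGroup X] [Module A X] [Finite X],
      Nat.card (X →ₗ[A] B) = Nat.card (X →ₗ[A] C)) :
    ∀ (n : ℕ) (X : Type u) [AddCommGroup X] [Module A X] [Finite X], Nat.card X ≤ n →
      Nat.card {g : X →ₗ[A] B // Injective g} = Nat.card {g : X →ₗ[A] C // Injective g} := by
  intro n
  induction n with
  | zero =>
    intro X _ _ _ hX
    have : 0 < Nat.card X := Nat.card_pos
    omega
  | succ n ih =>
    intro X _ _ _ hX
    classical
    haveI : Finite (Submodule A X) :=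
      Finite.of_injective (SetLike.coe) SetLike.coe_injective
    letI := Fintype.ofFinite (Submodule A X)
    haveI hq : ∀ N : Submodule A X, Finite (X ⧸ N) := fun N =>
      Finite.of_surjective _ N.mkQ_surjective
    haveI : ∀ N : Submodule A X, Finite {g : (X ⧸ N) →ₗ[A] B // Injective g} := fun N =>
      @Subtype.finite _ (finite_linearMap _ _) _
    haveI : ∀ N : Submodule A X, Finite {g : (X ⧸ N) →ₗ[A] C // Injective g} := fun N =>
      @Subtype.finite _ (finite_linearMap _ _) _
    have hsum : ∑ N : Submodule A X, Nat.card {g : (X ⧸ N) →ₗ[A] B // Injective g}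
        = ∑ N : Submodule A X, Nat.card {g : (X ⧸ N) →ₗ[A] C // Injective g} := by
      rw [← nat_card_sigma, ← nat_card_sigma, ← Nat.card_congr (homSigmaEquiv X B),
        ← Nat.card_congr (homSigmaEquiv X C)]
      exact hHom X
    have e3 : ∑ N ∈ Finset.univ.erase (⊥ : Submodule A X),
          Nat.card {g : (X ⧸ N) →ₗ[A] B // Injective g}
        = ∑ N ∈ Finset.univ.erase (⊥ : Submodule A X),
          Nat.card {g : (X ⧸ N) →ₗ[A] C // Injective g} :=
      Finset.sum_congr rfl fun N hN =>
        ih (X ⧸ N) (by have := card_quot_lt X (Finset.ne_of_mem_erase hN); omega)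
    rw [← Finset.add_sum_erase _ _ (Finset.mem_univ ⊥),
        ← Finset.add_sum_erase _ _ (Finset.mem_univ ⊥), e3] at hsum
    have hbot : Nat.card {g : (X ⧸ (⊥ : Submodule A X)) →ₗ[A] B // Injective g}
        = Nat.card {g : (X ⧸ (⊥ : Submodule A X)) →ₗ[A] C // Injective g} := by omega
    calc Nat.card {g : X →ₗ[A] B // Injective g}
        = Nat.card {g : (X ⧸ (⊥ : Submodule A X)) →ₗ[A] B // Injective g} :=
          (Nat.card_congr (injCongr (Submodule.quotEquivOfEqBot ⊥ rfl))).symm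
      _ = Nat.card {g : (X ⧸ (⊥ : Submodule A X)) →ₗ[A] C // Injective g} := hbot
      _ = Nat.card {g : X →ₗ[A] C // Injective g} :=
          Nat.card_congr (injCongr (Submodule.quotEquivOfEqBot ⊥ rfl))

/-- Hom into a product splits. -/
def homProdEquiv (X M B : Type u) [AddCommGroup X] [Module A X] [AddCommGroup M] [Module A M]
    [AddCommGroup B] [Module A B] :
    (X →ₗ[A] (M × B)) ≃ (X →ₗ[A] M) × (X →ₗ[A] B) where
  toFun f := ⟨(LinearMap.fst A M B) ∘ₗ f, (LinearMap.snd A M B) ∘ₗ f⟩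
  invFun g := LinearMap.prod g.1 g.2
  left_inv f := by ext x <;> simp
  right_inv g := by
    refine Prod.ext ?_ ?_ <;> ext x <;> simp

/-- postcomposition with a linear equivalence -/
def homCongrRight {X M M' : Type u} [AddCommGroup X] [Module A X] [AddCommGroup M] [Module A M]
    [AddCommGroup M'] [Module A M'] (e : M ≃ₗ[A] M') :
    (X →ₗ[A] M) ≃ (X →ₗ[A] M') where
  toFun f := (e : M →ₗ[A] M') ∘ₗ f
  invFun f := (e.symm : M' →ₗ[A] M) ∘ₗ f
  left_inv f := by ext x; simp
  right_inv f := by ext x; simp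

/-- Cancellation for finite modules. -/
theorem module_cancel {M M' B C : Type u}
    [AddCommGroup M] [Module A M] [Finite M] [AddCommGroup M'] [Module A M'] [Finite M']
    [AddCommGroup B] [Module A B] [Finite B] [AddCommGroup C] [Module A C] [Finite C]
    (e : (M × B) ≃ₗ[A] (M' × C)) (f : M ≃ₗ[A] M') : Nonempty (B ≃ₗ[A] C) := by
  have hHom : ∀ (X : Type u) [AddCommGroup X] [Module A X] [Finite X],
      Nat.card (X →ₗ[A] B) = Nat.card (X →ₗ[A] C) := by
    intro X _ _ _
    haveI := finite_linearMap (A := A) X M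
    haveI := finite_linearMap (A := A) X M'
    haveI := finite_linearMap (A := A) X B
    haveI := finite_linearMap (A := A) X C
    have h1 : Nat.card (X →ₗ[A] M) * Nat.card (X →ₗ[A] B)
        = Nat.card (X →ₗ[A] M') * Nat.card (X →ₗ[A] C) := by
      rw [← Nat.card_prod, ← Nat.card_prod, ← Nat.card_congr (homProdEquiv X M B),
        ← Nat.card_congr (homProdEquiv X M' C)]
      exact Nat.card_congr (homCongrRight e)
    have h2 : Nat.card (X →ₗ[A] M) = Nat.card (X →ₗ[A] M') := Nat.card_congr (homCongrRight f)
    have h3 : 0 < Nat.card (X →ₗ[A] M) := Nat.card_pos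
    rw [h2] at h1
    exact Nat.eq_of_mul_eq_mul_left (h2 ▸ h3) h1
  have hinj := inj_card_eq B C hHom (Nat.card B) B le_rfl
  haveI : Finite {g : B →ₗ[A] B // Injective g} := @Subtype.finite _ (finite_linearMap _ _) _
  haveI : Finite {g : B →ₗ[A] C // Injective g} := @Subtype.finite _ (finite_linearMap _ _) _
  have hpos : 0 < Nat.card {g : B →ₗ[A] B // Injective g} :=
    @Nat.card_pos _ ⟨⟨LinearMap.id, injective_id⟩⟩ _
  rw [hinj] at hpos
  obtain ⟨⟨g, hg⟩⟩ := (Nat.card_pos_iff.1 hpos).1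
  have hcard : Nat.card B = Nat.card C := by
    have h1 : Nat.card M * Nat.card B = Nat.card M' * Nat.card C := by
      rw [← Nat.card_prod, ← Nat.card_prod]; exact Nat.card_congr e.toEquiv
    have h2 : Nat.card M = Nat.card M' := Nat.card_congr f.toEquiv
    rw [h2] at h1
    exact Nat.eq_of_mul_eq_mul_left (h2 ▸ (Nat.card_pos : 0 < Nat.card M)) h1
  have hbij : Bijective g := by
    refine ⟨hg, ?_⟩
    classical
    letI := Fintype.ofFinite B
    letI := Fintype.ofFinite C
    rw [Nat.card_eq_fintype_card, Nat.card_eq_fintype_card] at hcard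
    exact (Fintype.bijective_iff_injective_and_card g).2 ⟨hg, hcard⟩ |>.2
  exact ⟨LinearEquiv.ofBijective g hbij⟩

end Counting

/-- In a finite monoid, some positive power of every element is idempotent,
with the shift property. -/
lemma exists_pow_idem {R : Type*} [Monoid R] [Finite R] (b : R) :
    ∃ N, 0 < N ∧ b ^ (2 * N) = b ^ N ∧ ∀ m, N ≤ m → b ^ (m + N) = b ^ m := by
  obtain ⟨i, j, hij, hpow⟩ := Finite.exists_ne_map_eq_of_infinite (fun n : ℕ => b ^ n)
  wlog hlt : i < j generalizing i j
  · exact this j i hij.symm hpow.symm (by omega)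
  set d := j - i with hd
  have hd1 : 0 < d := by omega
  have hshift : ∀ m, i ≤ m → b ^ (m + d) = b ^ m := by
    intro m hm
    have : b ^ (m + d) = b ^ (m - i) * b ^ (i + d) := by
      rw [← pow_add]; congr 1; omega
    rw [this, show i + d = j by omega, ← hpow, ← pow_add, show m - i + i = m by omega]
  have hshiftk : ∀ k m, i ≤ m → b ^ (m + k * d) = b ^ m := by
    intro k
    induction k with
    | zero => simp
    | succ k ih =>
      intro m hm
      have : m + (k + 1) * d = (m + k * d) + d := by ring
      rw [this, hshift _ (by omega), ih m hm]
  refine ⟨(i + 1) * d, by positivity, ?_, ?_⟩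
  · have : 2 * ((i + 1) * d) = (i + 1) * d + (i + 1) * d := by ring
    rw [this, hshiftk (i + 1) ((i + 1) * d) (by nlinarith)]
  · intro m hm
    have him : i ≤ m := by nlinarith
    have : m + (i + 1) * d = m + (i + 1) * d := rfl
    exact hshiftk (i + 1) m him

/-- uniform exponent for two elements -/
lemma exists_pow_idem₂ {R : Type*} [Monoid R] [Finite R] (b c : R) :
    ∃ N, 0 < N ∧ b ^ (2 * N) = b ^ N ∧ (∀ m, N ≤ m → b ^ (m + N) = b ^ m) ∧
      c ^ (2 * N) = c ^ N ∧ ∀ m, N ≤ m → c ^ (m + N) = c ^ m := by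
  obtain ⟨N₁, h1, hb2, hbs⟩ := exists_pow_idem b
  obtain ⟨N₂, h2, hc2, hcs⟩ := exists_pow_idem c
  have hmul : ∀ (a : R) (N : ℕ), 0 < N → (∀ m, N ≤ m → a ^ (m + N) = a ^ m) →
      ∀ k m, N ≤ m → a ^ (m + k * N) = a ^ m := by
    intro a N hN hs k
    induction k with
    | zero => simp
    | succ k ih =>
      intro m hm
      have : m + (k + 1) * N = (m + k * N) + N := by ring
      rw [this, hs _ (by omega), ih m hm]
  refine ⟨N₁ * N₂, by positivity, ?_, ?_, ?_, ?_⟩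
  · have : 2 * (N₁ * N₂) = N₁ * N₂ + N₂ * N₁ := by ring
    rw [this, hmul b N₁ h1 hbs N₂ _ (by nlinarith)]
  · intro m hm
    have : m + N₁ * N₂ = m + N₂ * N₁ := by ring
    rw [this, hmul b N₁ h1 hbs N₂ _ (by nlinarith)]
  · have : 2 * (N₁ * N₂) = N₁ * N₂ + N₁ * N₂ := by ring
    rw [this, hmul c N₂ h2 hcs N₁ _ (by nlinarith)]
  · intro m hm
    exact hmul c N₂ h2 hcs N₁ m (by nlinarith)

section Corner

variable {R : Type u} [Ring R]

/-- The "corner" right ideal `{x | δ * x = x}` as a module over `Rᵐᵒᵖ`. -/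
def corner (δ : R) : Submodule Rᵐᵒᵖ R where
  carrier := {x | δ * x = x}
  add_mem' := by
    intro x y hx hy
    simp only [Set.mem_setOf_eq] at *
    rw [mul_add, hx, hy]
  zero_mem' := by simp
  smul_mem' := by
    intro a x hx
    simp only [Set.mem_setOf_eq, MulOpposite.smul_eq_mul_unop] at *
    rw [← mul_assoc, hx]

lemma mem_corner {δ x : R} : x ∈ corner δ ↔ δ * x = x := Iff.rfl

lemma one_sub_idem {δ : R} (hδ : δ * δ = δ) : (1 - δ) * (1 - δ) = 1 - δ := by
  rw [sub_mul, mul_sub, mul_sub, mul_one, one_mul, hδ, mul_one, sub_self, sub_zero]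

/-- Peirce-type decomposition w.r.t. an idempotent. -/
def cornerProdEquiv (δ : R) (hδ : δ * δ = δ) :
    R ≃ₗ[Rᵐᵒᵖ] (corner δ × corner (1 - δ)) where
  toFun r := (⟨δ * r, by rw [mem_corner, ← mul_assoc, hδ]⟩,
    ⟨(1 - δ) * r, by rw [mem_corner, ← mul_assoc, one_sub_idem hδ]⟩)
  map_add' r s := by
    refine Prod.ext (Subtype.ext ?_) (Subtype.ext ?_) <;> simp [mul_add]
  map_smul' a r := by
    refine Prod.ext (Subtype.ext ?_) (Subtype.ext ?_) <;>
      simp [MulOpposite.smul_eq_mul_unop, mul_assoc]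
  invFun z := z.1.1 + z.2.1
  left_inv r := by simp [sub_mul]
  right_inv z := by
    obtain ⟨⟨v, hv⟩, ⟨w, hw⟩⟩ := z
    rw [mem_corner] at hv hw
    have hδw : δ * w = 0 := by
      have h := hw
      rw [sub_mul, one_mul] at h
      exact sub_eq_self.mp h
    have hv' : (1 - δ) * v = 0 := by
      rw [sub_mul, one_mul, hv, sub_self]
    refine Prod.ext (Subtype.ext ?_) (Subtype.ext ?_) <;>
      simp only [mul_add, hδw, hv', hv, hw, add_zero, zero_add]

/-- `p, q` implementing an isomorphism of corners. -/
def cornerMulEquiv {δ ε p q : R} (hpq : p * q = ε) (hqp : q * p = δ)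
    (hεp : ε * p = p) (hδq : δ * q = q) :
    corner δ ≃ₗ[Rᵐᵒᵖ] corner ε where
  toFun z := ⟨p * z.1, by rw [mem_corner, ← mul_assoc, hεp]⟩
  map_add' z w := Subtype.ext (by simp [mul_add])
  map_smul' a z := Subtype.ext (by simp [MulOpposite.smul_eq_mul_unop, mul_assoc])
  invFun z := ⟨q * z.1, by rw [mem_corner, ← mul_assoc, hδq]⟩
  left_inv z := Subtype.ext (by
    obtain ⟨v, hv⟩ := z
    rw [mem_corner] at hv
    simp only [← mul_assoc, hqp, hv])
  right_inv z := Subtype.ext (by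
    obtain ⟨v, hv⟩ := z
    rw [mem_corner] at hv
    simp only [← mul_assoc, hpq, hv])

end Corner

/-- Key lemma: in a finite ring, elements generating the same left ideal are
left-unit multiples of each other. -/
lemma exists_unit_mul_of_range_eq {R : Type u} [Ring R] [Fintype R] {x y : R}
    (h : Set.range (fun r : R => r * x) = Set.range (fun r : R => r * y)) :
    ∃ u : Rˣ, (u : R) * x = y := by
  obtain ⟨t, ht⟩ : ∃ t, t * x = y := by
    have : y ∈ Set.range (fun r : R => r * y) := ⟨1, one_mul y⟩
    rw [← h] at this; exact this
  obtain ⟨s, hs⟩ : ∃ s, s * y = x := by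
    have : x ∈ Set.range (fun r : R => r * x) := ⟨1, one_mul x⟩
    rw [h] at this; exact this
  have hstx : (s * t) * x = x := by rw [mul_assoc, ht, hs]
  set b := s * t with hb
  set c := t * s with hc
  obtain ⟨N, hN, hb2, hbs, hc2, hcs⟩ := exists_pow_idem₂ b c
  set δ := b ^ N with hδ
  set ε := c ^ N with hε
  have hδδ : δ * δ = δ := by rw [hδ, ← pow_add, show N + N = 2 * N by ring, hb2]
  have hεε : ε * ε = ε := by rw [hε, ← pow_add, show N + N = 2 * N by ring, hc2]
  -- powers of b fix x
  have hbkx : ∀ k, b ^ k * x = x := by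
    intro k
    induction k with
    | zero => simp
    | succ k ih => rw [pow_succ, mul_assoc, hstx, ih]
  have hδx : δ * x = x := hbkx N
  -- semiconjugation
  have hsc : ∀ k, t * b ^ k = c ^ k * t := fun k =>
    (SemiconjBy.pow_right (by simp [SemiconjBy, hb, hc, mul_assoc]) k).eq
  have hsc' : ∀ k, s * c ^ k = b ^ k * s := fun k =>
    (SemiconjBy.pow_right (by simp [SemiconjBy, hb, hc, mul_assoc]) k).eq
  set p := t * δ with hp
  set q := b ^ (2 * N - 1) * s with hq
  have hqp : q * p = δ := by
    rw [hq, hp, hδ, mul_assoc, ← mul_assoc s t (b ^ N), ← hb, ← pow_succ', ← pow_add]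
    rw [show 2 * N - 1 + (N + 1) = 2 * N + N by omega, hbs _ (by omega), hb2]
  have hpq : p * q = ε := by
    rw [hp, hq, hδ, mul_assoc, ← mul_assoc (b ^ N), ← pow_add, ← mul_assoc, hsc, mul_assoc,
      ← hc, ← pow_succ]
    rw [show N + (2 * N - 1) + 1 = 2 * N + N by omega, hcs _ (by omega), hc2]
  have hεp : ε * p = p := by
    rw [hp, ← mul_assoc, hε, ← hsc, hδ, mul_assoc, ← pow_add,
      show N + N = N + N by rfl, hbs N le_rfl]
  have hpδ : p * δ = p := by
    rw [hp, hδ, mul_assoc, ← pow_add, hbs N le_rfl]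
  have hδq : δ * q = q := by
    rw [hq, hδ, ← mul_assoc, ← pow_add, show N + (2 * N - 1) = (2 * N - 1) + N by ring,
      hbs _ (by omega)]
  have hqε : q * ε = q := by
    rw [hq, hε, mul_assoc, hsc', ← mul_assoc, ← pow_add,
      show 2 * N - 1 + N = (2 * N - 1) + N by rfl, hbs _ (by omega)]
  have hpx : p * x = y := by rw [hp, mul_assoc, hδx, ht]
  -- module cancellation
  haveI : Finite R := Finite.of_fintype R
  have e : (corner δ × corner (1 - δ)) ≃ₗ[Rᵐᵒᵖ] (corner ε × corner (1 - ε)) :=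
    (cornerProdEquiv δ hδδ).symm.trans (cornerProdEquiv ε hεε)
  have f : corner δ ≃ₗ[Rᵐᵒᵖ] corner ε := cornerMulEquiv hpq hqp hεp hδq
  obtain ⟨ψ⟩ := module_cancel e f
  have h1δ : (1 - δ) ∈ corner (1 - δ) := mem_corner.2 (one_sub_idem hδδ)
  have h1ε : (1 - ε) ∈ corner (1 - ε) := mem_corner.2 (one_sub_idem hεε)
  set w : R := (ψ ⟨1 - δ, h1δ⟩ : R) with hw
  set d : R := (ψ.symm ⟨1 - ε, h1ε⟩ : R) with hd
  have hwmem : (1 - ε) * w = w := mem_corner.1 (ψ ⟨1 - δ, h1δ⟩).2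
  have hdmem : (1 - δ) * d = d := mem_corner.1 (ψ.symm ⟨1 - ε, h1ε⟩).2
  -- w * (1 - δ) = w
  have hsmul : ∀ (γ : R) (hγ : γ * γ = γ) (z : corner (1-γ)) (r : R),
      ((op r • z : corner (1-γ)) : R) = (z : R) * r := fun γ hγ z r => rfl
  have hw2 : w * (1 - δ) = w := by
    have h1 : (op (1 - δ) : Rᵐᵒᵖ) • (⟨1 - δ, h1δ⟩ : corner (1 - δ)) = ⟨1 - δ, h1δ⟩ :=
      Subtype.ext (by
        show (1 - δ) * (1 - δ) = (1 - δ)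
        exact one_sub_idem hδδ)
    have := ψ.map_smul (op (1 - δ)) ⟨1 - δ, h1δ⟩
    rw [h1] at this
    have := congrArg (Subtype.val) this
    simpa [MulOpposite.smul_eq_mul_unop] using this.symm
  have hd2 : d * (1 - ε) = d := by
    have h1 : (op (1 - ε) : Rᵐᵒᵖ) • (⟨1 - ε, h1ε⟩ : corner (1 - ε)) = ⟨1 - ε, h1ε⟩ :=
      Subtype.ext (by
        show (1 - ε) * (1 - ε) = (1 - ε)
        exact one_sub_idem hεε)
    have := ψ.symm.map_smul (op (1 - ε)) ⟨1 - ε, h1ε⟩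
    rw [h1] at this
    have := congrArg (Subtype.val) this
    simpa [MulOpposite.smul_eq_mul_unop] using this.symm
  -- d * w = 1 - δ
  have hdw : d * w = 1 - δ := by
    have harg : (op w : Rᵐᵒᵖ) • (⟨1 - ε, h1ε⟩ : corner (1 - ε)) = ψ ⟨1 - δ, h1δ⟩ :=
      Subtype.ext (by
        show (1 - ε) * w = (ψ ⟨1 - δ, h1δ⟩ : R)
        rw [hwmem, hw])
    have := ψ.symm.map_smul (op w) ⟨1 - ε, h1ε⟩
    rw [harg, LinearEquiv.symm_apply_apply] at this
    have := congrArg (Subtype.val) this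
    simpa [MulOpposite.smul_eq_mul_unop] using this.symm
  -- w * d = 1 - ε
  have hwd : w * d = 1 - ε := by
    have harg : (op d : Rᵐᵒᵖ) • (⟨1 - δ, h1δ⟩ : corner (1 - δ)) = ψ.symm ⟨1 - ε, h1ε⟩ :=
      Subtype.ext (by
        show (1 - δ) * d = (ψ.symm ⟨1 - ε, h1ε⟩ : R)
        rw [hdmem, hd])
    have := ψ.map_smul (op d) ⟨1 - δ, h1δ⟩
    rw [harg, LinearEquiv.apply_symm_apply] at this
    have := congrArg (Subtype.val) this
    simpa [MulOpposite.smul_eq_mul_unop] using this.symm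
  -- zero products
  have hwδ : w * δ = 0 := by
    have : w * ((1 - δ) * δ) = w * δ := by rw [← mul_assoc, hw2]
    rw [sub_mul, one_mul, hδδ, sub_self, mul_zero] at this
    exact this.symm
  have hdε : d * ε = 0 := by
    have : d * ((1 - ε) * ε) = d * ε := by rw [← mul_assoc, hd2]
    rw [sub_mul, one_mul, hεε, sub_self, mul_zero] at this
    exact this.symm
  have hpd : p * d = 0 := by
    rw [← hdmem, ← mul_assoc, mul_sub, mul_one, hpδ, sub_self, zero_mul]
  have hwq : w * q = 0 := by
    rw [← hδq, ← mul_assoc, hwδ, zero_mul]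
  have hqw : q * w = 0 := by
    rw [← hwmem, ← mul_assoc, mul_sub, mul_one, hqε, sub_self, zero_mul]
  have hdp : d * p = 0 := by
    rw [← hεp, ← mul_assoc, hdε, zero_mul]
  have hwx : w * x = 0 := by
    rw [← hδx, ← mul_assoc, hwδ, zero_mul]
  refine ⟨⟨p + w, q + d, ?_, ?_⟩, ?_⟩
  · show (p + w) * (q + d) = 1
    rw [add_mul, mul_add, mul_add, hpq, hpd, hwq, hwd]
    abel
  · show (q + d) * (p + w) = 1
    rw [add_mul, mul_add, mul_add, hqp, hqw, hdp, hdw]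
    abel
  · show (p + w) * x = y
    rw [add_mul, hpx, hwx, add_zero]

end UnitsGenAux

open UnitsGenAux

/-- The unit group `U_R` acts transitively on the set `S_a` of generators of the principal left
ideal `I_a` by left multiplication, and `u ↦ u * a` induces a `U_R`-equivariant bijection
between `U_R / LStab(a)` and `S_a`. -/
theorem units_act_transitively_on_generators (R : Type*) [Ring R] [Fintype R] (a : R) :
    (∀ x ∈ {x : R | x ∈ Set.range (fun r : R => r * a) ∧
        Set.range (fun r : R => r * x) = Set.range (fun r : R => r * a)},
      ∀ y ∈ {x : R | x ∈ Set.range (fun r : R => r * a) ∧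
        Set.range (fun r : R => r * x) = Set.range (fun r : R => r * a)},
      ∃ u : Rˣ, (u : R) * x = y) ∧
    ∃ e : (Rˣ ⧸ MulAction.stabilizer Rˣ a) ≃
        {x : R | x ∈ Set.range (fun r : R => r * a) ∧
          Set.range (fun r : R => r * x) = Set.range (fun r : R => r * a)},
      (∀ u : Rˣ, (e (QuotientGroup.mk u) : R) = (u : R) * a) ∧
      ∀ (u : Rˣ) (c : Rˣ ⧸ MulAction.stabilizer Rˣ a),
        (e (u • c) : R) = (u : R) * (e c : R) := by
  set S : Set R := {x : R | x ∈ Set.range (fun r : R => r * a) ∧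
      Set.range (fun r : R => r * x) = Set.range (fun r : R => r * a)} with hS
  have hmemS : ∀ u : Rˣ, (u : R) * a ∈ S := by
    intro u
    refine ⟨⟨(u : R), rfl⟩, ?_⟩
    ext z
    constructor
    · rintro ⟨r, rfl⟩
      exact ⟨r * (u : R), by simp [mul_assoc]⟩
    · rintro ⟨r, rfl⟩
      exact ⟨r * ((u⁻¹ : Rˣ) : R), by simp [mul_assoc]⟩
  have part1 : ∀ x ∈ S, ∀ y ∈ S, ∃ u : Rˣ, (u : R) * x = y := by
    intro x hx y hy
    exact exists_unit_mul_of_range_eq (hx.2.trans hy.2.symm)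
  refine ⟨part1, ?_⟩
  have haS : a ∈ S := ⟨⟨1, one_mul a⟩, rfl⟩
  have hex : ∀ x : S, ∃ u : Rˣ, (u : R) * a = (x : R) := fun x =>
    exists_unit_mul_of_range_eq (x.2.2.symm)
  have hwd : ∀ u v : Rˣ,
      @Setoid.r _ (QuotientGroup.leftRel (MulAction.stabilizer Rˣ a)) u v →
      (⟨(u : R) * a, hmemS u⟩ : S) = ⟨(v : R) * a, hmemS v⟩ := by
    intro u v huv
    rw [QuotientGroup.leftRel_apply] at huv
    have := MulAction.mem_stabilizer_iff.1 huv
    rw [Units.smul_def, Units.val_mul, smul_eq_mul, mul_assoc] at this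
    apply Subtype.ext
    show (u : R) * a = (v : R) * a
    calc (u : R) * a = (u : R) * (((u⁻¹ : Rˣ) : R) * ((v : R) * a)) := by rw [this]
    _ = (v : R) * a := by rw [← mul_assoc, ← mul_assoc]; simp
  refine ⟨{
    toFun := fun c => Quotient.liftOn' c (fun u => (⟨(u : R) * a, hmemS u⟩ : S)) hwd
    invFun := fun x => QuotientGroup.mk (Classical.choose (hex x))
    left_inv := ?_
    right_inv := ?_ }, ?_, ?_⟩
  · intro c
    induction c using Quotient.inductionOn' with
    | h u =>
      show QuotientGroup.mk _ = QuotientGroup.mk u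
      rw [QuotientGroup.eq]
      have hspec := Classical.choose_spec (hex ⟨(u : R) * a, hmemS u⟩)
      set u' : Rˣ := Classical.choose (hex ⟨(u : R) * a, hmemS u⟩) with hu'def
      have hspec' : (u' : R) * a = (u : R) * a := hspec
      rw [MulAction.mem_stabilizer_iff, Units.smul_def, Units.val_mul, smul_eq_mul, mul_assoc]
      show ((u'⁻¹ : Rˣ) : R) * ((u : R) * a) = a
      rw [← hspec']
      simp [← mul_assoc]
  · intro x
    exact Subtype.ext (Classical.choose_spec (hex x))
  · intro u
    rfl
  · intro u c
    induction c using Quotient.inductionOn' with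
    | h v =>
      have : u • (QuotientGroup.mk v : Rˣ ⧸ MulAction.stabilizer Rˣ a)
          = QuotientGroup.mk (u * v) := MulAction.Quotient.smul_mk _ u v
      rw [show (Quotient.mk'' v : Rˣ ⧸ MulAction.stabilizer Rˣ a) = QuotientGroup.mk v from rfl,
        this]
      show ((u * v : Rˣ) : R) * a = (u : R) * ((v : R) * a)
      rw [Units.val_mul, mul_assoc]
end

section
/- For distinct characters χ_1 ≠ χ_2 of F_q^×, the induced representation ρ_{χ_1,χ_2} = Ind_B^{GL_2(F_q)}(χ_{1,2}) is irreducible, where B is the Borel subgroup of upper triangular matrices and χ_{1,2}([[u,w],[0,v]]) = χ_1(u)χ_2(v). -/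
open CategoryTheory Module

variable {G : Type} [Group G] [Fintype G]

/-- The space of the representation of `G` induced from a one-dimensional character `χ` of a
subgroup `H` (for the trivial character this is `Ind_H^G 1`): the subspace of functions
`f : G → ℂ` with `f (b * g) = χ b * f g` for `b ∈ H`, with `G` acting by right translation. -/
noncomputable def indCarrier (H : Subgroup G) (χ : G → ℂ) : Submodule ℂ (G → ℂ) where
  carrier := {f | ∀ b ∈ H, ∀ g : G, f (b * g) = χ b * f g}
  add_mem' := by
    intro f g hf hg b hb x
    simp only [Pi.add_apply, hf b hb x, hg b hb x, mul_add]
  zero_mem' := by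
    intro b hb x; simp
  smul_mem' := by
    intro c f hf b hb x
    simp only [Pi.smul_apply, smul_eq_mul, hf b hb x]
    ring

/-- The induced representation `Ind_H^G χ`, as right translation on `indCarrier H χ`. -/
noncomputable def indRep (H : Subgroup G) (χ : G → ℂ) : Representation ℂ G (indCarrier H χ) where
  toFun g :=
    { toFun := fun f => ⟨fun x => (f : G → ℂ) (x * g), fun b hb x => by
        simpa [mul_assoc] using f.2 b hb (x * g)⟩
      map_add' := fun f h => rfl
      map_smul' := fun c f => rfl }
  map_one' := by
    ext f x
    simp
  map_mul' := fun g h => by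
    ext f x
    simp [mul_assoc]

noncomputable example (H : Subgroup G) (χ : G → ℂ) : FDRep ℂ G := FDRep.of (indRep H χ)

variable (F : Type) [Field F] [Fintype F] [DecidableEq F]

/-- The BorelGL2 subgroup of upper triangular matrices in `GL_2(F)`. -/
def BorelGL2 : Subgroup (GL (Fin 2) F) where
  carrier := {g | (g : Matrix (Fin 2) (Fin 2) F) 1 0 = 0}
  one_mem' := by simp [Set.mem_setOf_eq, Matrix.one_apply]
  mul_mem' := by
    intro a b ha hb
    simp only [Set.mem_setOf_eq, Units.val_mul, Matrix.mul_apply, Fin.sum_univ_two] at *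
    rw [ha, hb]
    ring
  inv_mem' := by
    intro a ha
    simp only [Set.mem_setOf_eq] at *
    have h1 : (a : Matrix (Fin 2) (Fin 2) F) * ((a⁻¹ : GL (Fin 2) F) : Matrix (Fin 2) (Fin 2) F)
        = 1 := a.mul_inv
    have h2 := congrFun (congrFun h1 1) 0
    simp only [Matrix.mul_apply, Fin.sum_univ_two, Matrix.one_apply, ha] at h2
    have hdet : ((a : Matrix (Fin 2) (Fin 2) F)).det ≠ 0 :=
      ((Matrix.isUnit_iff_isUnit_det _).mp a.isUnit).ne_zero
    have h11 : (a : Matrix (Fin 2) (Fin 2) F) 1 1 ≠ 0 := by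
      intro h
      apply hdet
      rw [Matrix.det_fin_two, ha, h]
      ring
    rcases (by simpa using h2 : (a : Matrix (Fin 2) (Fin 2) F) 1 1 = 0 ∨
        ((a⁻¹ : GL (Fin 2) F) : Matrix (Fin 2) (Fin 2) F) 1 0 = 0) with h | h
    · exact absurd h h11
    · exact h

/-- The subgroup `P` of `GL_2(F)` of matrices of the form `[[1, y], [0, w]]`. -/
def mirabolic : Subgroup (GL (Fin 2) F) where
  carrier := {g | (g : Matrix (Fin 2) (Fin 2) F) 0 0 = 1 ∧
    (g : Matrix (Fin 2) (Fin 2) F) 1 0 = 0}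
  one_mem' := by simp [Set.mem_setOf_eq, Matrix.one_apply]
  mul_mem' := by
    intro a b ha hb
    simp only [Set.mem_setOf_eq, Units.val_mul, Matrix.mul_apply, Fin.sum_univ_two] at *
    rw [ha.1, ha.2, hb.1, hb.2]
    constructor <;> ring
  inv_mem' := by
    intro a ha
    simp only [Set.mem_setOf_eq] at *
    have h1 : ((a⁻¹ : GL (Fin 2) F) : Matrix (Fin 2) (Fin 2) F) * (a : Matrix (Fin 2) (Fin 2) F)
        = 1 := a.inv_mul
    have h00 := congrFun (congrFun h1 0) 0
    have h10 := congrFun (congrFun h1 1) 0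
    simp only [Matrix.mul_apply, Fin.sum_univ_two, Matrix.one_apply, ha.1, ha.2, mul_one,
      mul_zero, add_zero] at h00 h10
    exact ⟨by simpa using h00, by simpa using h10⟩

/-- The extension by zero of a character of `F^×` to `F`. -/
noncomputable def extChar (χ : Fˣ →* ℂˣ) : F → ℂ :=
  fun x => if h : IsUnit x then (χ h.unit : ℂ) else 0


set_option linter.unusedSectionVars false

section GeneralLemmas

/-- restriction of a representation to an invariant submodule -/
noncomputable def resRep {V : Type} [AddCommGroup V] [Module ℂ V]
    (ρ : Representation ℂ G V) (W : Submodule ℂ V)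
    (hW : ∀ g, ∀ x ∈ W, ρ g x ∈ W) : Representation ℂ G W where
  toFun g := (ρ g).restrict (hW g)
  map_one' := by ext x; simp
  map_mul' g h := by ext x; simp [LinearMap.restrict_apply]

theorem simple_of_invariant_dichotomy {V : Type} [AddCommGroup V] [Module ℂ V]
    [FiniteDimensional ℂ V] (ρ : Representation ℂ G V) [Nontrivial V]
    (hdich : ∀ W : Submodule ℂ V, (∀ g, ∀ x ∈ W, ρ g x ∈ W) → W = ⊥ ∨ W = ⊤) :
    Simple (FDRep.of ρ) := by
  constructor
  intro Y f hf
  constructor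
  · intro hiso h0
    have h1 : 𝟙 (FDRep.of ρ) = CategoryTheory.inv f ≫ (0 : Y ⟶ FDRep.of ρ) := by
      rw [← h0]; simp
    rw [Limits.comp_zero] at h1
    have h2 := congrArg (fun (g : FDRep.of ρ ⟶ FDRep.of ρ) => g.hom) h1
    obtain ⟨v, hv⟩ := exists_ne (0 : V)
    have h3 := congrFun (congrArg (fun (l : (FDRep.of ρ).V ⟶ (FDRep.of ρ).V) => (l : V → V)) h2) v
    exact hv (h3.trans rfl)
  · intro hne
    -- injectivity via kernel subrepresentation
    set K := LinearMap.ker f.hom.hom.hom with hKdef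
    have hK : ∀ g : G, ∀ x ∈ K, Y.ρ g x ∈ K := by
      intro g x hx
      have hc : f.hom.hom.hom (Y.ρ g x) = ρ g (f.hom.hom.hom x) := ConcreteCategory.congr_hom (f.comm g) x
      have hx0 : f.hom.hom.hom x = 0 := hx
      show f.hom.hom.hom (Y.ρ g x) = 0
      rw [hc, hx0, map_zero]
    have hinj : Function.Injective f.hom.hom.hom := by
      rw [← LinearMap.ker_eq_bot, ← hKdef]
      by_contra hKne
      obtain ⟨x, hxK, hx0⟩ := Submodule.exists_mem_ne_zero_of_ne_bot hKne
      let Z : FDRep ℂ G := FDRep.of (resRep Y.ρ K hK)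
      let i : Z ⟶ Y := ⟨ObjectProperty.homMk (ModuleCat.ofHom K.subtype), fun g => rfl⟩
      have hif : i ≫ f = 0 := by
        apply Action.Hom.ext
        apply ObjectProperty.hom_ext
        apply ModuleCat.hom_ext
        apply LinearMap.ext
        intro z
        exact z.2
      have : i = 0 := (cancel_mono f).mp (by rw [hif]; simp)
      have := congrFun (congrArg (fun l => ((l : Z ⟶ Y).hom : Z.V → Y.V)) this) ⟨x, hxK⟩
      exact hx0 this
    have hsurj : Function.Surjective f.hom.hom.hom := by
      have hW : ∀ g : G, ∀ x ∈ LinearMap.range f.hom.hom.hom, ρ g x ∈ LinearMap.range f.hom.hom.hom := by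
        rintro g x ⟨y, rfl⟩
        refine ⟨Y.ρ g y, ?_⟩
        have hc : f.hom.hom.hom (Y.ρ g y) = ρ g (f.hom.hom.hom y) := ConcreteCategory.congr_hom (f.comm g) y
        exact hc
      rcases hdich _ hW with hbot | htop
      · exfalso
        apply hne
        apply Action.Hom.ext
        apply ObjectProperty.hom_ext
        apply ModuleCat.hom_ext
        apply LinearMap.ext
        intro y
        have : f.hom.hom.hom y ∈ LinearMap.range f.hom.hom.hom := ⟨y, rfl⟩
        rw [hbot] at this
        simpa using this
      · rw [← LinearMap.range_eq_top]; exact htop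
    let e : Y.V ≃ₗ[ℂ] V := LinearEquiv.ofBijective f.hom.hom.hom ⟨hinj, hsurj⟩
    let gmor : FDRep.of ρ ⟶ Y :=
      ⟨ObjectProperty.homMk (ModuleCat.ofHom e.symm.toLinearMap), by
        intro g
        apply ObjectProperty.hom_ext
        apply ModuleCat.hom_ext
        apply LinearMap.ext
        intro v
        apply hinj
        show f.hom.hom.hom (e.symm (ρ g v)) = f.hom.hom.hom (Y.ρ g (e.symm v))
        have h1 : ∀ w, f.hom.hom.hom (e.symm w) = w := fun w => e.apply_symm_apply w
        have hc : f.hom.hom.hom (Y.ρ g (e.symm v)) = ρ g (f.hom.hom.hom (e.symm v)) :=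
          ConcreteCategory.congr_hom (f.comm g) (e.symm v)
        rw [h1, hc]
        show _ = ρ g (f.hom.hom.hom (e.symm v))
        rw [h1]⟩
    refine ⟨gmor, ?_, ?_⟩
    · apply Action.Hom.ext
      apply ObjectProperty.hom_ext
      apply ModuleCat.hom_ext
      apply LinearMap.ext
      intro y
      show e.symm (f.hom.hom.hom y) = y
      exact e.symm_apply_apply y
    · apply Action.Hom.ext
      apply ObjectProperty.hom_ext
      apply ModuleCat.hom_ext
      apply LinearMap.ext
      intro v
      show f.hom.hom.hom (e.symm v) = v
      exact e.apply_symm_apply v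

theorem dichotomy_of_scalar_comm {V : Type} [AddCommGroup V] [Module ℂ V]
    (ρ : Representation ℂ G V)
    (hsc : ∀ φ : V →ₗ[ℂ] V, (∀ g : G, φ ∘ₗ ρ g = ρ g ∘ₗ φ) → ∃ c : ℂ, φ = c • LinearMap.id)
    (W : Submodule ℂ V) (hW : ∀ g : G, ∀ x ∈ W, ρ g x ∈ W) : W = ⊥ ∨ W = ⊤ := by
  by_cases hbot : W = ⊥
  · exact Or.inl hbot
  right
  obtain ⟨w, hwW, hw0⟩ := Submodule.exists_mem_ne_zero_of_ne_bot hbot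
  obtain ⟨Q, hQ⟩ := Submodule.exists_isCompl W
  set π₀ : V →ₗ[ℂ] V := W.subtype ∘ₗ (W.projectionOnto Q hQ) with hπ₀
  have hπ₀mem : ∀ v, π₀ v ∈ W := fun v => (W.projectionOnto Q hQ v).2
  have hπ₀id : ∀ v ∈ W, π₀ v = v := by
    intro v hv
    simp [hπ₀, Submodule.projectionOnto_apply_left hQ ⟨v, hv⟩]
  set Φ : V →ₗ[ℂ] V := ∑ g : G, (ρ g⁻¹) ∘ₗ π₀ ∘ₗ (ρ g) with hΦ
  have hΦapp : ∀ v, Φ v = ∑ g : G, ρ g⁻¹ (π₀ (ρ g v)) := by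
    intro v; rw [hΦ, LinearMap.sum_apply]; rfl
  have key : ∀ (a b : G) (v : V), ρ a (ρ b v) = ρ (a * b) v := by
    intro a b v; rw [map_mul]; rfl
  have hcomm : ∀ h : G, Φ ∘ₗ ρ h = ρ h ∘ₗ Φ := by
    intro h
    apply LinearMap.ext
    intro v
    show Φ (ρ h v) = ρ h (Φ v)
    rw [hΦapp, hΦapp, map_sum]
    refine Fintype.sum_equiv (Equiv.mulRight h) _ _ ?_
    intro x
    simp only [Equiv.coe_mulRight]
    rw [key x h v, mul_inv_rev, key h (h⁻¹ * x⁻¹) _, ← mul_assoc, mul_inv_cancel, one_mul]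
  obtain ⟨c, hc⟩ := hsc Φ hcomm
  have hΦw : Φ w = (Fintype.card G : ℂ) • w := by
    rw [hΦapp]
    have hterm : ∀ g : G, ρ g⁻¹ (π₀ (ρ g w)) = w := by
      intro g
      rw [hπ₀id _ (hW g w hwW), key, inv_mul_cancel, map_one]
      rfl
    rw [Fintype.sum_congr _ _ hterm, Finset.sum_const, Finset.card_univ,
      Nat.cast_smul_eq_nsmul]
  have e1 : c • w = (Fintype.card G : ℂ) • w := by
    rw [← hΦw, hc]; rfl
  have hcval : c = (Fintype.card G : ℂ) := by
    have h3 : (c - (Fintype.card G : ℂ)) • w = 0 := by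
      rw [sub_smul, e1, sub_self]
    rcases smul_eq_zero.mp h3 with h4 | h4
    · exact sub_eq_zero.mp h4
    · exact absurd h4 hw0
  have hcne : c ≠ 0 := by
    rw [hcval]
    exact_mod_cast Nat.cast_ne_zero.mpr Fintype.card_ne_zero
  rw [Submodule.eq_top_iff']
  intro v
  have hΦv : Φ v ∈ W := by
    rw [hΦapp]
    apply Submodule.sum_mem
    intro g _
    exact hW g⁻¹ _ (hπ₀mem _)
  have hv2 : Φ v = c • v := by rw [hc]; rfl
  rw [hv2] at hΦv
  have := Submodule.smul_mem W c⁻¹ hΦv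
  rwa [inv_smul_smul₀ hcne] at this

end GeneralLemmas

section ExtCharLemmas

variable {F : Type} [Field F] [Fintype F] [DecidableEq F]

theorem extChar_one (χ : Fˣ →* ℂˣ) : extChar F χ 1 = 1 := by
  rw [extChar, dif_pos isUnit_one]
  have : isUnit_one.unit = (1 : Fˣ) := Units.ext rfl
  rw [this, map_one, Units.val_one]

theorem extChar_coe (χ : Fˣ →* ℂˣ) (u : Fˣ) : extChar F χ (u : F) = χ u := by
  rw [extChar, dif_pos u.isUnit]
  congr 1
  exact congrArg χ (Units.ext rfl)

theorem extChar_mul (χ : Fˣ →* ℂˣ) (x y : F) :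
    extChar F χ (x * y) = extChar F χ x * extChar F χ y := by
  by_cases hx : x = 0
  · simp [extChar, hx, isUnit_iff_ne_zero]
  by_cases hy : y = 0
  · simp [extChar, hy, isUnit_iff_ne_zero]
  have hxu : IsUnit x := isUnit_iff_ne_zero.mpr hx
  have hyu : IsUnit y := isUnit_iff_ne_zero.mpr hy
  have hxy : IsUnit (x * y) := hxu.mul hyu
  rw [extChar, extChar, extChar, dif_pos hxy, dif_pos hxu, dif_pos hyu]
  have : hxy.unit = hxu.unit * hyu.unit := Units.ext rfl
  rw [this, map_mul, Units.val_mul]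

end ExtCharLemmas

section Specific

variable {F : Type} [Field F] [Fintype F] [DecidableEq F] (χ1 χ2 : Fˣ →* ℂˣ)

/-- abbreviation for the character of the Borel subgroup -/
noncomputable def chiB (χ1 χ2 : Fˣ →* ℂˣ) : GL (Fin 2) F → ℂ :=
  fun g => extChar F χ1 ((g : Matrix (Fin 2) (Fin 2) F) 0 0) *
    extChar F χ2 ((g : Matrix (Fin 2) (Fin 2) F) 1 1)

theorem diag_isUnit {b : GL (Fin 2) F} (hb : b ∈ BorelGL2 F) :
    IsUnit ((b : Matrix (Fin 2) (Fin 2) F) 0 0) ∧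
      IsUnit ((b : Matrix (Fin 2) (Fin 2) F) 1 1) := by
  have hdet : IsUnit ((b : Matrix (Fin 2) (Fin 2) F)).det :=
    (Matrix.isUnit_iff_isUnit_det _).mp b.isUnit
  rw [Matrix.det_fin_two] at hdet
  have hb' : (b : Matrix (Fin 2) (Fin 2) F) 1 0 = 0 := hb
  rw [hb', mul_zero, sub_zero] at hdet
  exact ⟨isUnit_of_mul_isUnit_left hdet,
    isUnit_of_mul_isUnit_left (by rwa [mul_comm] at hdet)⟩

theorem chiB_mul {b c : GL (Fin 2) F} (hb : b ∈ BorelGL2 F) (hc : c ∈ BorelGL2 F) :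
    chiB χ1 χ2 (b * c) = chiB χ1 χ2 b * chiB χ1 χ2 c := by
  have hb' : (b : Matrix (Fin 2) (Fin 2) F) 1 0 = 0 := hb
  have hc' : (c : Matrix (Fin 2) (Fin 2) F) 1 0 = 0 := hc
  have h00 : ((b * c : GL (Fin 2) F) : Matrix (Fin 2) (Fin 2) F) 0 0
      = (b : Matrix (Fin 2) (Fin 2) F) 0 0 * (c : Matrix (Fin 2) (Fin 2) F) 0 0 := by
    show ((b : Matrix (Fin 2) (Fin 2) F) * (c : Matrix (Fin 2) (Fin 2) F)) 0 0 = _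
    rw [Matrix.mul_apply, Fin.sum_univ_two, hc', mul_zero, add_zero]
  have h11 : ((b * c : GL (Fin 2) F) : Matrix (Fin 2) (Fin 2) F) 1 1
      = (b : Matrix (Fin 2) (Fin 2) F) 1 1 * (c : Matrix (Fin 2) (Fin 2) F) 1 1 := by
    show ((b : Matrix (Fin 2) (Fin 2) F) * (c : Matrix (Fin 2) (Fin 2) F)) 1 1 = _
    rw [Matrix.mul_apply, Fin.sum_univ_two, hb', zero_mul, zero_add]
  rw [chiB, h00, h11, extChar_mul, extChar_mul]
  show _ = extChar F χ1 _ * extChar F χ2 _ * (extChar F χ1 _ * extChar F χ2 _)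
  ring

theorem chiB_one : chiB χ1 χ2 (1 : GL (Fin 2) F) = 1 := by
  have h00 : ((1 : GL (Fin 2) F) : Matrix (Fin 2) (Fin 2) F) 0 0 = 1 := by
    simp [Matrix.one_apply]
  have h11 : ((1 : GL (Fin 2) F) : Matrix (Fin 2) (Fin 2) F) 1 1 = 1 := by
    simp [Matrix.one_apply]
  rw [chiB, h00, h11, extChar_one, extChar_one, one_mul]

theorem chiB_inv_mul {b : GL (Fin 2) F} (hb : b ∈ BorelGL2 F) :
    chiB χ1 χ2 b⁻¹ * chiB χ1 χ2 b = 1 := by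
  rw [← chiB_mul χ1 χ2 ((BorelGL2 F).inv_mem hb) hb, inv_mul_cancel, chiB_one]

end Specific

set_option linter.unusedSectionVars false

section Delta
open Classical

variable {F : Type} [Field F] [Fintype F] [DecidableEq F] (χ1 χ2 : Fˣ →* ℂˣ)

/-- the canonical cyclic vector of the principal series -/
noncomputable def deltaFun (χ1 χ2 : Fˣ →* ℂˣ) : GL (Fin 2) F → ℂ :=
  fun x => if x ∈ BorelGL2 F then chiB χ1 χ2 x else 0

theorem deltaFun_mem : deltaFun χ1 χ2 ∈ indCarrier (BorelGL2 F) (chiB χ1 χ2) := by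
  intro b hb g
  by_cases hg : g ∈ BorelGL2 F
  · simp only [deltaFun]
    rw [if_pos ((BorelGL2 F).mul_mem hb hg), if_pos hg, chiB_mul χ1 χ2 hb hg]
  · simp only [deltaFun]
    rw [if_neg hg, if_neg (fun hbg => hg (by
      have := (BorelGL2 F).mul_mem ((BorelGL2 F).inv_mem hb) hbg
      rwa [inv_mul_cancel_left] at this)), mul_zero]

noncomputable def delta (χ1 χ2 : Fˣ →* ℂˣ) : indCarrier (BorelGL2 F) (chiB χ1 χ2) :=
  ⟨deltaFun χ1 χ2, deltaFun_mem χ1 χ2⟩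

/-- upper triangular invertible matrix as an element of GL₂ -/
noncomputable def upperGL (p q : Fˣ) (β : F) : GL (Fin 2) F where
  val := !![(p : F), β; 0, (q : F)]
  inv := !![((p⁻¹ : Fˣ) : F), -((p⁻¹ : Fˣ) : F) * β * ((q⁻¹ : Fˣ) : F); 0, ((q⁻¹ : Fˣ) : F)]
  val_inv := by
    have hp : ((p⁻¹ : Fˣ) : F) = (p : F)⁻¹ := Units.val_inv_eq_inv_val p
    have hq : ((q⁻¹ : Fˣ) : F) = (q : F)⁻¹ := Units.val_inv_eq_inv_val q
    ext i j
    fin_cases i <;> fin_cases j <;>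
      · simp [Matrix.mul_apply, Fin.sum_univ_two, Matrix.one_apply, hp, hq]
        try field_simp
        try ring
  inv_val := by
    have hp : ((p⁻¹ : Fˣ) : F) = (p : F)⁻¹ := Units.val_inv_eq_inv_val p
    have hq : ((q⁻¹ : Fˣ) : F) = (q : F)⁻¹ := Units.val_inv_eq_inv_val q
    ext i j
    fin_cases i <;> fin_cases j <;>
      · simp [Matrix.mul_apply, Fin.sum_univ_two, Matrix.one_apply, hp, hq]
        try field_simp
        try ring

theorem upperGL_mem (p q : Fˣ) (β : F) : upperGL p q β ∈ BorelGL2 F := by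
  show (!![(p : F), β; 0, (q : F)]) 1 0 = 0
  simp

theorem upperGL_chiB (p q : Fˣ) (β : F) :
    chiB χ1 χ2 (upperGL p q β) = (χ1 p : ℂ) * (χ2 q : ℂ) := by
  show extChar F χ1 ((!![(p : F), β; 0, (q : F)]) 0 0) *
      extChar F χ2 ((!![(p : F), β; 0, (q : F)]) 1 1) = _
  have e0 : (!![(p : F), β; 0, (q : F)]) 0 0 = (p : F) := by simp
  have e1 : (!![(p : F), β; 0, (q : F)]) 1 1 = (q : F) := by simp
  rw [e0, e1, extChar_coe, extChar_coe]

/-- key conjugation identity -/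
theorem upperGL_conj (x : GL (Fin 2) F) (hc : (x : Matrix (Fin 2) (Fin 2) F) 1 0 ≠ 0)
    (u : Fˣ) :
    (upperGL u 1 ((x : Matrix (Fin 2) (Fin 2) F) 0 0 * (1 - (u:F)) /
        (x : Matrix (Fin 2) (Fin 2) F) 1 0)) * x *
      (upperGL 1 u⁻¹ ((x : Matrix (Fin 2) (Fin 2) F) 1 1 * (1 - ((u⁻¹ : Fˣ):F)) /
        (x : Matrix (Fin 2) (Fin 2) F) 1 0)) = x := by
  set a := (x : Matrix (Fin 2) (Fin 2) F) 0 0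
  set b := (x : Matrix (Fin 2) (Fin 2) F) 0 1
  set c := (x : Matrix (Fin 2) (Fin 2) F) 1 0
  set d := (x : Matrix (Fin 2) (Fin 2) F) 1 1
  have hx : (x : Matrix (Fin 2) (Fin 2) F) = !![a, b; c, d] := by
    ext i j; fin_cases i <;> fin_cases j <;> rfl
  apply Units.ext
  show (!![(u : F), a * (1 - (u:F)) / c; 0, (1:F)]) * (x : Matrix (Fin 2) (Fin 2) F) *
      (!![(1 : F), d * (1 - ((u⁻¹:Fˣ):F)) / c; 0, ((u⁻¹:Fˣ):F)]) = _
  rw [hx]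
  have hu : (u : F) ≠ 0 := Units.ne_zero u
  have hui : ((u⁻¹ : Fˣ) : F) = (u : F)⁻¹ := Units.val_inv_eq_inv_val u
  ext i j
  fin_cases i <;> fin_cases j <;>
    · simp [Matrix.mul_apply, Fin.sum_univ_two, hui]
      try field_simp
      try ring
end Delta

section Scalar
open Classical Module

variable {F : Type} [Field F] [Fintype F] [DecidableEq F] (χ1 χ2 : Fˣ →* ℂˣ)

theorem indRep_apply {G : Type} [Group G] [Fintype G] (H : Subgroup G) (χ : G → ℂ)
    (g : G) (f : indCarrier H χ) (x : G) :
    ((indRep H χ g f : indCarrier H χ) : G → ℂ) x = (f : G → ℂ) (x * g) := rfl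

theorem rho_delta {b : GL (Fin 2) F} (hb : b ∈ BorelGL2 F) :
    indRep (BorelGL2 F) (chiB χ1 χ2) b (delta χ1 χ2) = chiB χ1 χ2 b • delta χ1 χ2 := by
  apply Subtype.ext
  funext x
  rw [indRep_apply]
  show deltaFun χ1 χ2 (x * b) = (chiB χ1 χ2 b • deltaFun χ1 χ2) x
  rw [Pi.smul_apply, smul_eq_mul]
  by_cases hx : x ∈ BorelGL2 F
  · simp only [deltaFun]
    rw [if_pos ((BorelGL2 F).mul_mem hx hb), if_pos hx, chiB_mul χ1 χ2 hx hb]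
    ring
  · simp only [deltaFun]
    rw [if_neg hx, if_neg (fun hxb => hx (by
      have := (BorelGL2 F).mul_mem hxb ((BorelGL2 F).inv_mem hb)
      rwa [mul_inv_cancel_right] at this)), mul_zero]

theorem scalar_comm (h : χ1 ≠ χ2)
    (φ : indCarrier (BorelGL2 F) (chiB χ1 χ2) →ₗ[ℂ] indCarrier (BorelGL2 F) (chiB χ1 χ2))
    (hφ : ∀ g : GL (Fin 2) F,
      φ ∘ₗ indRep (BorelGL2 F) (chiB χ1 χ2) g = indRep (BorelGL2 F) (chiB χ1 χ2) g ∘ₗ φ) :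
    ∃ c : ℂ, φ = c • LinearMap.id := by
  set δ := delta χ1 χ2 with hδ
  set f := φ δ with hf
  -- right translation property of f
  have hright : ∀ b ∈ BorelGL2 F, ∀ x : GL (Fin 2) F, (f : GL (Fin 2) F → ℂ) (x * b)
      = chiB χ1 χ2 b * (f : GL (Fin 2) F → ℂ) x := by
    intro b hb x
    have h1 : φ (indRep (BorelGL2 F) (chiB χ1 χ2) b δ) = indRep (BorelGL2 F) (chiB χ1 χ2) b (φ δ) := LinearMap.congr_fun (hφ b) δ
    rw [rho_delta χ1 χ2 hb, map_smul] at h1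
    have h2 := congrFun (congrArg (fun (v : indCarrier (BorelGL2 F) (chiB χ1 χ2)) => (v : GL (Fin 2) F → ℂ))
      h1.symm) x
    simpa [indRep_apply] using h2
  -- existence of a separating unit
  obtain ⟨u, hu⟩ : ∃ u : Fˣ, χ1 u ≠ χ2 u := by
    by_contra hne
    push_neg at hne
    exact h (MonoidHom.ext hne)
  -- support of f
  have hsupp : ∀ x : GL (Fin 2) F, x ∉ BorelGL2 F → (f : GL (Fin 2) F → ℂ) x = 0 := by
    intro x hx
    have hc : (x : Matrix (Fin 2) (Fin 2) F) 1 0 ≠ 0 := hx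
    set b := upperGL u 1 ((x : Matrix (Fin 2) (Fin 2) F) 0 0 * (1 - (u:F)) /
        (x : Matrix (Fin 2) (Fin 2) F) 1 0) with hb
    set b' := upperGL 1 u⁻¹ ((x : Matrix (Fin 2) (Fin 2) F) 1 1 * (1 - ((u⁻¹ : Fˣ):F)) /
        (x : Matrix (Fin 2) (Fin 2) F) 1 0) with hb'
    have hconj : b * x * b' = x := upperGL_conj x hc u
    have e1 : (f : GL (Fin 2) F → ℂ) (b * (x * b')) = chiB χ1 χ2 b * (f : GL (Fin 2) F → ℂ) (x * b') :=
      f.2 b (upperGL_mem _ _ _) (x * b')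
    rw [hright b' (upperGL_mem _ _ _) x] at e1
    rw [← mul_assoc, hconj] at e1
    have hχb : chiB χ1 χ2 b = (χ1 u : ℂ) := by
      rw [hb, upperGL_chiB, map_one, Units.val_one, mul_one]
    have hχb' : chiB χ1 χ2 b' = ((χ2 u : ℂˣ) : ℂ)⁻¹ := by
      rw [hb', upperGL_chiB, map_one, Units.val_one, one_mul, map_inv, Units.val_inv_eq_inv_val]
    rw [hχb, hχb'] at e1
    -- e1 : f x = χ1 u * ((χ2 u)⁻¹ * f x)
    by_contra hfx
    apply hu
    have h2 : (χ1 u : ℂ) * ((χ2 u : ℂ))⁻¹ = 1 := by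
      have := mul_right_cancel₀ hfx (by linear_combination e1 : 
        (1 : ℂ) * (f : GL (Fin 2) F → ℂ) x = ((χ1 u : ℂ) * ((χ2 u : ℂ))⁻¹) * (f : GL (Fin 2) F → ℂ) x)
      exact this.symm
    have h3 : (χ1 u : ℂ) = (χ2 u : ℂ) := by
      field_simp at h2
      exact h2
    exact Units.ext h3
  -- f is a multiple of delta
  set c := (f : GL (Fin 2) F → ℂ) 1 with hc
  have hfδ : φ δ = c • δ := by
    apply Subtype.ext
    funext x
    show (f : GL (Fin 2) F → ℂ) x = c * deltaFun χ1 χ2 x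
    by_cases hx : x ∈ BorelGL2 F
    · have := hright x hx 1
      rw [one_mul] at this
      rw [this, deltaFun, if_pos hx, ← hc]
      ring
    · rw [hsupp x hx, deltaFun, if_neg hx, mul_zero]
  -- cyclicity of delta
  set N := (Finset.univ.filter (fun b => b ∈ BorelGL2 F)).card with hN
  have hNne : (N : ℂ) ≠ 0 := by
    rw [hN]
    exact_mod_cast Nat.cast_ne_zero.mpr (Finset.card_ne_zero_of_mem
      (Finset.mem_filter.mpr ⟨Finset.mem_univ 1, (BorelGL2 F).one_mem⟩))
  have hcyc : ∀ v : indCarrier (BorelGL2 F) (chiB χ1 χ2),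
      (N : ℂ) • v = ∑ g : GL (Fin 2) F,
        (v : GL (Fin 2) F → ℂ) g • indRep (BorelGL2 F) (chiB χ1 χ2) g⁻¹ δ := by
    intro v
    apply Subtype.ext
    funext x
    have hev : ∀ (w : indCarrier (BorelGL2 F) (chiB χ1 χ2)), (w : GL (Fin 2) F → ℂ) x
        = ((LinearMap.proj x).comp (Submodule.subtype _) :
            indCarrier (BorelGL2 F) (chiB χ1 χ2) →ₗ[ℂ] ℂ) w := fun w => rfl
    show (N : ℂ) * (v : GL (Fin 2) F → ℂ) x = _
    rw [hev, hev, map_sum]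
    have hterm : ∀ g : GL (Fin 2) F,
        ((LinearMap.proj x).comp (Submodule.subtype _) :
          indCarrier (BorelGL2 F) (chiB χ1 χ2) →ₗ[ℂ] ℂ)
          ((v : GL (Fin 2) F → ℂ) g • indRep (BorelGL2 F) (chiB χ1 χ2) g⁻¹ δ)
        = (v : GL (Fin 2) F → ℂ) g * deltaFun χ1 χ2 (x * g⁻¹) := by
      intro g
      rw [map_smul]
      rfl
    rw [Fintype.sum_congr _ _ hterm]
    have reidx : ∑ g : GL (Fin 2) F, (v : GL (Fin 2) F → ℂ) g * deltaFun χ1 χ2 (x * g⁻¹)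
        = ∑ b : GL (Fin 2) F, (if b ∈ BorelGL2 F then (v : GL (Fin 2) F → ℂ) x else 0) := by
      refine Fintype.sum_equiv ((Equiv.inv (GL (Fin 2) F)).trans (Equiv.mulLeft x)) _ _ ?_
      intro g
      simp only [Equiv.trans_apply, Equiv.inv_apply, Equiv.coe_mulLeft]
      by_cases hg : x * g⁻¹ ∈ BorelGL2 F
      · rw [if_pos hg]
        have hg2 : (x * g⁻¹)⁻¹ * x = g := by group
        have hv : (v : GL (Fin 2) F → ℂ) ((x * g⁻¹)⁻¹ * x)
            = chiB χ1 χ2 (x * g⁻¹)⁻¹ * (v : GL (Fin 2) F → ℂ) x :=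
          v.2 _ ((BorelGL2 F).inv_mem hg) x
        rw [hg2] at hv
        rw [hv, deltaFun, if_pos hg]
        calc chiB χ1 χ2 (x * g⁻¹)⁻¹ * (v : GL (Fin 2) F → ℂ) x * chiB χ1 χ2 (x * g⁻¹)
            = (chiB χ1 χ2 (x * g⁻¹)⁻¹ * chiB χ1 χ2 (x * g⁻¹)) * (v : GL (Fin 2) F → ℂ) x := by
              ring
          _ = (v : GL (Fin 2) F → ℂ) x := by rw [chiB_inv_mul χ1 χ2 hg, one_mul]
      · rw [if_neg hg, deltaFun, if_neg hg, mul_zero]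
    rw [reidx, ← Finset.sum_filter, Finset.sum_const, nsmul_eq_mul]
    rfl
  refine ⟨c, LinearMap.ext fun v => ?_⟩
  have key : (N : ℂ) • φ v = (N : ℂ) • (c • v) := by
    calc (N : ℂ) • φ v = φ ((N : ℂ) • v) := (map_smul φ _ _).symm
      _ = φ (∑ g : GL (Fin 2) F,
            (v : GL (Fin 2) F → ℂ) g • indRep (BorelGL2 F) (chiB χ1 χ2) g⁻¹ δ) := by
          rw [hcyc v]
      _ = ∑ g : GL (Fin 2) F, (v : GL (Fin 2) F → ℂ) g •
            φ (indRep (BorelGL2 F) (chiB χ1 χ2) g⁻¹ δ) := by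
          rw [map_sum]
          exact Finset.sum_congr rfl fun g _ => map_smul φ _ _
      _ = ∑ g : GL (Fin 2) F, (v : GL (Fin 2) F → ℂ) g •
            indRep (BorelGL2 F) (chiB χ1 χ2) g⁻¹ (c • δ) := by
          refine Finset.sum_congr rfl fun g _ => ?_
          rw [← hfδ]
          congr 1
          exact LinearMap.congr_fun (hφ g⁻¹) δ
      _ = c • ∑ g : GL (Fin 2) F,
            (v : GL (Fin 2) F → ℂ) g • indRep (BorelGL2 F) (chiB χ1 χ2) g⁻¹ δ := by
          rw [Finset.smul_sum]
          refine Finset.sum_congr rfl fun g _ => ?_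
          rw [map_smul]
          exact smul_comm _ _ _
      _ = c • ((N : ℂ) • v) := by rw [← hcyc v]
      _ = (N : ℂ) • (c • v) := smul_comm _ _ _
  have := smul_right_injective (indCarrier (BorelGL2 F) (chiB χ1 χ2)) hNne key
  simpa using this

end Scalar

/-- For distinct characters `χ₁ ≠ χ₂` of `F^×`, the principal series representation
`ρ_{χ₁,χ₂} = Ind_B^{GL_2(F)}(χ_{1,2})`, with `χ_{1,2}([[u,w],[0,v]]) = χ₁(u)χ₂(v)`,
is irreducible. -/
theorem principal_series_irreducible (F : Type) [Field F] [Fintype F] [DecidableEq F]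
    (χ1 χ2 : Fˣ →* ℂˣ) (h : χ1 ≠ χ2) :
    CategoryTheory.Simple (FDRep.of (indRep (BorelGL2 F)
      (fun g => extChar F χ1 ((g : Matrix (Fin 2) (Fin 2) F) 0 0) *
        extChar F χ2 ((g : Matrix (Fin 2) (Fin 2) F) 1 1)))) := by
  have hδne : delta χ1 χ2 ≠ 0 := by
    intro he
    have h1 : deltaFun χ1 χ2 1 = 0 := congrFun (congrArg Subtype.val he) 1
    rw [deltaFun, if_pos (BorelGL2 F).one_mem, chiB_one] at h1
    exact one_ne_zero h1
  haveI : Nontrivial (indCarrier (BorelGL2 F) (chiB χ1 χ2)) := nontrivial_of_ne _ _ hδne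
  show CategoryTheory.Simple (FDRep.of (indRep (BorelGL2 F) (chiB χ1 χ2)))
  exact simple_of_invariant_dichotomy _
    (fun W hW => dichotomy_of_scalar_comm _ (scalar_comm χ1 χ2 h) W hW)
end

section
/- Let M = (α/n) J + (1−α) B, where J is the n×n all-ones matrix, B is a row-stochastic n×n matrix, and 0 < α < 1. If the eigenvalues of B are λ_1 = 1, λ_2, …, λ_n, then the eigenvalues of M are 1, (1−α)λ_2, …, (1−α)λ_n. -/
open Polynomial

open Matrix

lemma eval_charpoly_aux {n : ℕ} (M : Matrix (Fin n) (Fin n) ℂ) (x : ℂ) :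
    M.charpoly.eval x = (x • (1 : Matrix (Fin n) (Fin n) ℂ) - M).det := by
  rw [Matrix.charpoly, ← Polynomial.coe_evalRingHom, RingHom.map_det]
  congr 1
  ext i j
  by_cases h : i = j <;>
    simp [h, charmatrix_apply_eq, charmatrix_apply_ne, Matrix.one_apply, Matrix.smul_apply]


/-- If `M = (α/n) J + (1−α) B` with `J` the all-ones matrix and `B` row-stochastic with
(complex) eigenvalues `λ_1 = 1, λ_2, …, λ_n` (counted with algebraic multiplicity, i.e.
`charpoly B = ∏ (X − λ_i)`), then the eigenvalues of `M` are
`1, (1−α)λ_2, …, (1−α)λ_n`. -/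
theorem eigenvalues_of_shifted_stochastic_matrix (n : ℕ) (hn : 0 < n)
    (α : ℝ) (hα0 : 0 < α) (hα1 : α < 1)
    (B : Matrix (Fin n) (Fin n) ℝ) (hB : ∀ i, ∑ j, B i j = 1)
    (lam : Fin n → ℂ) (hl1 : lam ⟨0, hn⟩ = 1)
    (hch : (B.map (Complex.ofReal : ℝ → ℂ)).charpoly = ∏ i, (X - C (lam i))) :
    (((α / (n : ℝ)) • (Matrix.of fun _ _ => (1 : ℝ)) + (1 - α) • B).map
        (Complex.ofReal : ℝ → ℂ)).charpoly
      = ∏ i : Fin n, (X - C (if i = ⟨0, hn⟩ then 1 else (1 - (α : ℂ)) * lam i)) := by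
  set c : ℂ := 1 - (α : ℂ) with hc_def
  have hc : c ≠ 0 := by
    simp only [hc_def, sub_ne_zero]
    intro h
    have : (α : ℝ) = 1 := by exact_mod_cast h.symm
    linarith
  have hn0 : (n : ℂ) ≠ 0 := Nat.cast_ne_zero.mpr hn.ne'
  set B' : Matrix (Fin n) (Fin n) ℂ := B.map Complex.ofReal with hB'
  set M' : Matrix (Fin n) (Fin n) ℂ :=
    (((α / (n : ℝ)) • (Matrix.of fun _ _ => (1 : ℝ)) + (1 - α) • B).map
      (Complex.ofReal : ℝ → ℂ)) with hM'
  have hrow : ∀ i, ∑ j, B' i j = 1 := by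
    intro i
    simp only [hB', Matrix.map_apply]
    rw [← Complex.ofReal_sum, hB i, Complex.ofReal_one]
  apply Polynomial.eq_of_infinite_eval_eq
  have hfin : (Set.range (fun i => c * lam i)).Finite := Set.finite_range _
  apply Set.Infinite.mono (s := (Set.range (fun i => c * lam i))ᶜ)
  swap
  · exact hfin.infinite_compl
  intro x hx
  simp only [Set.mem_compl_iff, Set.mem_range, not_exists] at hx
  have hx' : ∀ i, x ≠ c * lam i := fun i h => hx i h.symm
  have hxc : x ≠ c := by simpa [hl1] using hx' ⟨0, hn⟩
  simp only [Set.mem_setOf_eq]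
  set A : Matrix (Fin n) (Fin n) ℂ := x • 1 - c • B' with hA
  have hdetA : A.det = ∏ i, (x - c * lam i) := by
    have h1 : A = c • ((x / c) • 1 - B') := by
      rw [smul_sub, smul_smul, mul_div_cancel₀ _ hc]
    rw [h1, det_smul, ← eval_charpoly_aux, hch]
    simp only [eval_prod, eval_sub, eval_X, eval_C, Fintype.card_fin]
    rw [show (c ^ n : ℂ) = ∏ _i : Fin n, c by simp, ← Finset.prod_mul_distrib]
    exact Finset.prod_congr rfl fun i _ => by rw [mul_sub, mul_div_cancel₀ _ hc]
  have hdetA_ne : A.det ≠ 0 := by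
    rw [hdetA]
    exact Finset.prod_ne_zero_iff.mpr fun i _ => sub_ne_zero.mpr (hx' i)
  have hAunit : IsUnit A.det := isUnit_iff_ne_zero.mpr hdetA_ne
  have hA1 : A *ᵥ (fun _ => (1 : ℂ)) = fun _ => (x - c) := by
    funext i
    simp only [hA, Matrix.mulVec, dotProduct, Matrix.sub_apply, Matrix.smul_apply,
      Matrix.one_apply, mul_one, Finset.sum_sub_distrib, smul_eq_mul]
    rw [show (∑ j : Fin n, c * B' i j) = c by rw [← Finset.mul_sum, hrow i, mul_one]]
    simp [Finset.sum_ite_eq]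
  have hAinv1 : A⁻¹ *ᵥ (fun _ => (1 : ℂ)) = fun _ => (x - c)⁻¹ := by
    have h2 : (fun _ => (1 : ℂ)) = (x - c)⁻¹ • (A *ᵥ (fun _ => (1 : ℂ))) := by
      rw [hA1]; funext i; simp [inv_mul_cancel₀ (sub_ne_zero.mpr hxc)]
    rw [h2, Matrix.mulVec_smul, Matrix.mulVec_mulVec, Matrix.nonsing_inv_mul A hAunit]
    funext i; simp [Matrix.one_mulVec]
  have hAinvsum : ∀ i, ∑ j, A⁻¹ i j = (x - c)⁻¹ := by
    intro i
    have := congrFun hAinv1 i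
    simpa [Matrix.mulVec, dotProduct] using this
  -- the rank one decomposition
  have hsplit : x • (1 : Matrix (Fin n) (Fin n) ℂ) - M' =
      A + replicateCol Unit (fun _ : Fin n => -((α : ℂ) / (n : ℂ))) * replicateRow Unit (fun _ : Fin n => (1 : ℂ)) := by
    ext i j
    simp only [hA, hM', Matrix.sub_apply, Matrix.add_apply, Matrix.smul_apply, Matrix.map_apply,
      Matrix.mul_apply, Matrix.replicateCol_apply, Matrix.replicateRow_apply, Matrix.one_apply, Matrix.of_apply,
      Pi.add_apply, Pi.smul_apply, smul_eq_mul, Finset.univ_unique, Finset.sum_singleton,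
      hB', hc_def]
    push_cast
    ring
  rw [eval_charpoly_aux, hsplit, Matrix.det_add_replicateCol_mul_replicateRow hAunit]
  have hcorr : ((1 + replicateRow Unit (fun _ : Fin n => (1 : ℂ)) * A⁻¹ *
      replicateCol Unit (fun _ : Fin n => -((α : ℂ) / (n : ℂ))) : Matrix Unit Unit ℂ)).det
      = 1 - (α : ℂ) * (x - c)⁻¹ := by
    rw [Matrix.det_unique]
    simp only [Matrix.add_apply, Matrix.one_apply_eq, Matrix.mul_apply, Matrix.replicateCol_apply,
      Matrix.replicateRow_apply, Finset.univ_unique, Finset.sum_singleton, one_mul]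
    have hswap : ∑ j : Fin n, (∑ i : Fin n, A⁻¹ i j) * -((α : ℂ) / (n : ℂ))
        = -((α : ℂ) / (n : ℂ)) * ∑ i : Fin n, ∑ j : Fin n, A⁻¹ i j := by
      simp only [Finset.mul_sum, Finset.sum_mul]
      exact Finset.sum_comm.trans (Finset.sum_congr rfl fun _ _ => Finset.sum_congr rfl fun _ _ => mul_comm _ _)
    rw [hswap]
    simp only [hAinvsum, Finset.sum_const, Finset.card_univ, Fintype.card_fin, nsmul_eq_mul]
    have hxc2 : x - c ≠ 0 := sub_ne_zero.mpr hxc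
    field_simp [hn0]
    ring
  rw [hcorr, hdetA]
  -- now pure algebra
  simp only [eval_prod, eval_sub, eval_X, eval_C]
  have hmem : (⟨0, hn⟩ : Fin n) ∈ Finset.univ := Finset.mem_univ _
  rw [← Finset.mul_prod_erase _ _ hmem, ← Finset.mul_prod_erase _ _ hmem]
  rw [hl1, if_pos rfl, mul_one]
  have hP : ∏ i ∈ Finset.univ.erase (⟨0, hn⟩ : Fin n),
      (x - if i = ⟨0, hn⟩ then 1 else c * lam i)
      = ∏ i ∈ Finset.univ.erase (⟨0, hn⟩ : Fin n), (x - c * lam i) :=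
    Finset.prod_congr rfl fun i hi => by rw [if_neg (Finset.ne_of_mem_erase hi)]
  rw [hP]
  have hxc2 : x - c ≠ 0 := sub_ne_zero.mpr hxc
  field_simp [hxc2]
  ring
end

section
/- In the ring M_2(F_q) with q > 2, the set {identity matrix, E_{12} (matrix with single 1 in position (1,2)), zero matrix} ∪ {[[1,z],[0,0]] : z ∈ F_q} is a complete set of representatives of the distinct principal left ideals of M_2(F_q); in particular M_2(F_q) has exactly q + 3 distinct principal left ideals. -/
open Matrix
set_option linter.unusedSectionVars false
set_option maxHeartbeats 1000000

variable {F : Type} [Field F] [Fintype F] [DecidableEq F]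

private lemma range_mul_subset' {A B : Matrix (Fin 2) (Fin 2) F} (h : ∃ X, B = X * A) :
    Set.range (fun X : Matrix (Fin 2) (Fin 2) F => X * B)
      ⊆ Set.range (fun X : Matrix (Fin 2) (Fin 2) F => X * A) := by
  obtain ⟨X, rfl⟩ := h
  rintro _ ⟨Y, rfl⟩
  exact ⟨Y * X, (mul_assoc Y X A)⟩

private lemma range_mul_eq_iff' {A B : Matrix (Fin 2) (Fin 2) F} :
    Set.range (fun X : Matrix (Fin 2) (Fin 2) F => X * B)
      = Set.range (fun X : Matrix (Fin 2) (Fin 2) F => X * A)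
    ↔ (∃ X, B = X * A) ∧ (∃ Y, A = Y * B) := by
  constructor
  · intro h
    constructor
    · have : B ∈ Set.range (fun X : Matrix (Fin 2) (Fin 2) F => X * B) := ⟨1, (one_mul B)⟩
      rw [h] at this; obtain ⟨X, hX⟩ := this; exact ⟨X, hX.symm⟩
    · have : A ∈ Set.range (fun X : Matrix (Fin 2) (Fin 2) F => X * A) := ⟨1, (one_mul A)⟩
      rw [← h] at this; obtain ⟨Y, hY⟩ := this; exact ⟨Y, hY.symm⟩
  · rintro ⟨h1, h2⟩
    exact le_antisymm (range_mul_subset' h1) (range_mul_subset' h2)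

private lemma e12_eq' : Matrix.single 0 1 (1 : F) = !![0,1;0,0] := by
  ext i j
  fin_cases i <;> fin_cases j <;> simp [Matrix.single]

-- impossibility lemmas
private lemma not_one_eq_mul_sing {A : Matrix (Fin 2) (Fin 2) F} (hA : A.det = 0) :
    ¬ ∃ X, (1 : Matrix (Fin 2) (Fin 2) F) = X * A := by
  rintro ⟨X, hX⟩
  have : (1 : Matrix (Fin 2) (Fin 2) F).det = X.det * A.det := by rw [hX, Matrix.det_mul]
  rw [hA, mul_zero, Matrix.det_one] at this
  exact one_ne_zero this

private lemma detE : (!![0,1;0,0] : Matrix (Fin 2) (Fin 2) F).det = 0 := by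
  simp [Matrix.det_fin_two_of]

private lemma detMz (z : F) : (!![1,z;0,0] : Matrix (Fin 2) (Fin 2) F).det = 0 := by
  simp [Matrix.det_fin_two_of]

private lemma not_E_eq_mul_zero : ¬ ∃ X, (!![0,1;0,0] : Matrix (Fin 2) (Fin 2) F) = X * 0 := by
  rintro ⟨X, hX⟩
  have := congrFun (congrFun hX 0) 1
  simp at this

private lemma not_Mz_eq_mul_zero (z : F) :
    ¬ ∃ X, (!![1,z;0,0] : Matrix (Fin 2) (Fin 2) F) = X * 0 := by
  rintro ⟨X, hX⟩
  have := congrFun (congrFun hX 0) 0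
  simp at this

private lemma not_E_eq_mul_Mz (z : F) :
    ¬ ∃ X, (!![0,1;0,0] : Matrix (Fin 2) (Fin 2) F) = X * !![1,z;0,0] := by
  rintro ⟨X, hX⟩
  have h0 := congrFun (congrFun hX 0) 0
  have h1 := congrFun (congrFun hX 0) 1
  simp [Matrix.mul_apply, Fin.sum_univ_two] at h0 h1
  rw [← h0, zero_mul] at h1
  exact (one_ne_zero : (1:F) ≠ 0) h1

private lemma not_Mz_eq_mul_E (z : F) :
    ¬ ∃ X, (!![1,z;0,0] : Matrix (Fin 2) (Fin 2) F) = X * !![0,1;0,0] := by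
  rintro ⟨X, hX⟩
  have h0 := congrFun (congrFun hX 0) 0
  simp [Matrix.mul_apply, Fin.sum_univ_two] at h0

private lemma Mz_eq_mul_Mz {z z' : F} (h : ∃ X, (!![1,z';0,0] : Matrix (Fin 2) (Fin 2) F) = X * !![1,z;0,0]) : z' = z := by
  obtain ⟨X, hX⟩ := h
  have h0 := congrFun (congrFun hX 0) 0
  have h1 := congrFun (congrFun hX 0) 1
  simp [Matrix.mul_apply, Fin.sum_univ_two] at h0 h1
  rw [h1, ← h0, one_mul]

example : True := trivial

/-- In `M_2(F_q)` with `q > 2`, the set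
`{1, E_{12}, 0} ∪ {[[1,z],[0,0]] : z ∈ F_q}` is a complete set of representatives of the
distinct principal left ideals; in particular there are exactly `q + 3` distinct principal
left ideals. -/
theorem m2_principal_left_ideal_representatives (F : Type) [Field F] [Fintype F]
    [DecidableEq F] (hq : 2 < Fintype.card F) :
    (∀ B : Matrix (Fin 2) (Fin 2) F,
      ∃ A ∈ ({1, Matrix.single 0 1 (1 : F), 0} ∪
          Set.range fun z : F => Matrix.of ![![(1 : F), z], ![0, 0]]),
        Set.range (fun X : Matrix (Fin 2) (Fin 2) F => X * B)
          = Set.range (fun X : Matrix (Fin 2) (Fin 2) F => X * A)) ∧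
    Set.InjOn (fun A => Set.range (fun X : Matrix (Fin 2) (Fin 2) F => X * A))
      ({1, Matrix.single 0 1 (1 : F), 0} ∪
        Set.range fun z : F => Matrix.of ![![(1 : F), z], ![0, 0]]) ∧
    Nat.card {S : Set (Matrix (Fin 2) (Fin 2) F) //
        ∃ A : Matrix (Fin 2) (Fin 2) F,
          S = Set.range (fun X : Matrix (Fin 2) (Fin 2) F => X * A)}
      = Fintype.card F + 3 := by
  classical
  have part1 : ∀ B : Matrix (Fin 2) (Fin 2) F,
      ∃ A ∈ ({1, Matrix.single 0 1 (1 : F), 0} ∪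
          Set.range fun z : F => Matrix.of ![![(1 : F), z], ![0, 0]]),
        Set.range (fun X : Matrix (Fin 2) (Fin 2) F => X * B)
          = Set.range (fun X : Matrix (Fin 2) (Fin 2) F => X * A) := by
    intro B
    obtain ⟨a, b, c, d, rfl⟩ : ∃ a b c d, B = !![a,b;c,d] :=
      ⟨_, _, _, _, Matrix.eta_fin_two B⟩
    by_cases hdet : a * d - b * c = 0
    · by_cases ha : a = 0
      · by_cases hb : b = 0
        · by_cases hc : c = 0
          · by_cases hd : d = 0
            · -- zero matrix
              refine ⟨0, Set.mem_union_left _ (by simp), ?_⟩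
              have hB0 : (!![a,b;c,d] : Matrix (Fin 2) (Fin 2) F) = 0 := by
                subst ha hb hc hd
                ext i j; fin_cases i <;> fin_cases j <;> simp
              rw [hB0]
            · -- B = !![0,0;0,d], d ≠ 0 : E12
              refine ⟨Matrix.single 0 1 (1 : F),
                Set.mem_union_left _ (by simp), ?_⟩
              rw [range_mul_eq_iff', e12_eq']
              subst ha hb hc
              refine ⟨⟨!![0,0;d,0], ?_⟩, ⟨!![0,d⁻¹;0,0], ?_⟩⟩ <;>
              · ext i j
                fin_cases i <;> fin_cases j <;>
                  simp [Matrix.mul_apply, Fin.sum_univ_two] <;> field_simp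
          · -- B = !![0,0;c,d], c ≠ 0 : Mz (d/c)
            refine ⟨Matrix.of ![![(1:F), d/c], ![0,0]],
              Set.mem_union_right _ ⟨d/c, rfl⟩, ?_⟩
            rw [range_mul_eq_iff']
            subst ha hb
            refine ⟨⟨!![0,0;c,0], ?_⟩, ⟨!![0,c⁻¹;0,0], ?_⟩⟩ <;>
            · ext i j
              fin_cases i <;> fin_cases j <;>
                simp [Matrix.mul_apply, Fin.sum_univ_two] <;> field_simp
        · -- a = 0, b ≠ 0; det = 0 forces c = 0 : E12
          have hc : c = 0 := by
            subst ha
            simpa [hb] using hdet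
          refine ⟨Matrix.single 0 1 (1 : F),
            Set.mem_union_left _ (by simp), ?_⟩
          rw [range_mul_eq_iff', e12_eq']
          subst ha hc
          refine ⟨⟨!![b,0;d,0], ?_⟩, ⟨!![b⁻¹,0;0,0], ?_⟩⟩ <;>
          · ext i j
            fin_cases i <;> fin_cases j <;>
              simp [Matrix.mul_apply, Fin.sum_univ_two] <;> field_simp
      · -- a ≠ 0 : Mz (b/a)
        have hdet' : a * d = b * c := sub_eq_zero.mp hdet
        refine ⟨Matrix.of ![![(1:F), b/a], ![0,0]],
          Set.mem_union_right _ ⟨b/a, rfl⟩, ?_⟩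
        rw [range_mul_eq_iff']
        refine ⟨⟨!![a,0;c,0], ?_⟩, ⟨!![a⁻¹,0;0,0], ?_⟩⟩ <;>
        · ext i j
          fin_cases i <;> fin_cases j <;>
            simp [Matrix.mul_apply, Fin.sum_univ_two] <;> field_simp <;>
            linear_combination hdet'
    · -- invertible : 1
      refine ⟨1, Set.mem_union_left _ (by simp), ?_⟩
      rw [range_mul_eq_iff']
      have hu : IsUnit (!![a,b;c,d] : Matrix (Fin 2) (Fin 2) F).det := by
        rw [Matrix.det_fin_two_of]
        exact isUnit_iff_ne_zero.mpr hdet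
      exact ⟨⟨!![a,b;c,d], (mul_one _).symm⟩,
        ⟨(!![a,b;c,d])⁻¹, (Matrix.nonsing_inv_mul _ hu).symm⟩⟩
  have part2 : Set.InjOn (fun A => Set.range (fun X : Matrix (Fin 2) (Fin 2) F => X * A))
      ({1, Matrix.single 0 1 (1 : F), 0} ∪
        Set.range fun z : F => Matrix.of ![![(1 : F), z], ![0, 0]]) := by
    intro A hA A' hA' h
    simp only [e12_eq', Set.mem_union, Set.mem_insert_iff, Set.mem_singleton_iff,
      Set.mem_range] at hA hA'
    simp only [] at h
    rw [range_mul_eq_iff'] at h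
    obtain ⟨h1, h2⟩ := h
    rcases hA with (rfl | rfl | rfl) | ⟨z, rfl⟩ <;>
      rcases hA' with (rfl | rfl | rfl) | ⟨z', rfl⟩
    · rfl
    · exact absurd h1 (not_one_eq_mul_sing detE)
    · exact absurd h1 (not_one_eq_mul_sing (by simp))
    · exact absurd h1 (not_one_eq_mul_sing (detMz z'))
    · exact absurd h2 (not_one_eq_mul_sing detE)
    · rfl
    · exact absurd h1 not_E_eq_mul_zero
    · exact absurd h1 (not_E_eq_mul_Mz z')
    · exact absurd h2 (not_one_eq_mul_sing (by simp))
    · exact absurd h2 not_E_eq_mul_zero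
    · rfl
    · exact absurd h2 (not_Mz_eq_mul_zero z')
    · exact absurd h2 (not_one_eq_mul_sing (detMz z))
    · exact absurd h2 (not_E_eq_mul_Mz z)
    · exact absurd h1 (not_Mz_eq_mul_zero z)
    · rw [Mz_eq_mul_Mz h1]
  refine ⟨part1, part2, ?_⟩
  have key : {S : Set (Matrix (Fin 2) (Fin 2) F) |
        ∃ A : Matrix (Fin 2) (Fin 2) F,
          S = Set.range (fun X : Matrix (Fin 2) (Fin 2) F => X * A)}
      = (fun A => Set.range (fun X : Matrix (Fin 2) (Fin 2) F => X * A)) ''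
        ({1, Matrix.single 0 1 (1 : F), 0} ∪
          Set.range fun z : F => Matrix.of ![![(1 : F), z], ![0, 0]]) := by
    ext S
    simp only [Set.mem_setOf_eq, Set.mem_image]
    constructor
    · rintro ⟨A, rfl⟩
      obtain ⟨A', hA', hEq⟩ := part1 A
      exact ⟨A', hA', hEq.symm⟩
    · rintro ⟨A, _, rfl⟩
      exact ⟨A, rfl⟩
  have step1 : Nat.card {S : Set (Matrix (Fin 2) (Fin 2) F) //
        ∃ A : Matrix (Fin 2) (Fin 2) F,
          S = Set.range (fun X : Matrix (Fin 2) (Fin 2) F => X * A)}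
      = Set.ncard {S : Set (Matrix (Fin 2) (Fin 2) F) |
        ∃ A : Matrix (Fin 2) (Fin 2) F,
          S = Set.range (fun X : Matrix (Fin 2) (Fin 2) F => X * A)} :=
    Nat.card_coe_set_eq _
  rw [step1, key, Set.ncard_image_of_injOn part2]
  -- now count the representative set
  have hR : ({1, Matrix.single 0 1 (1 : F), 0} ∪
        Set.range fun z : F => Matrix.of ![![(1 : F), z], ![0, 0]])
      = insert (1 : Matrix (Fin 2) (Fin 2) F)
          (insert (Matrix.single 0 1 (1 : F))
            (insert 0 (Set.range fun z : F => Matrix.of ![![(1 : F), z], ![0, 0]]))) := by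
    rw [Set.insert_union, Set.insert_union, Set.singleton_union]
  have Minj : Function.Injective (fun z : F => Matrix.of ![![(1 : F), z], ![0, 0]]) := by
    intro z z' hzz
    have := congrFun (congrFun hzz 0) 1
    simpa using this
  have h0nm : (0 : Matrix (Fin 2) (Fin 2) F)
      ∉ Set.range fun z : F => Matrix.of ![![(1 : F), z], ![0, 0]] := by
    rintro ⟨z, hz⟩
    have := congrFun (congrFun hz 0) 0
    simp at this
  have hEnm : Matrix.single 0 1 (1 : F)
      ∉ insert 0 (Set.range fun z : F => Matrix.of ![![(1 : F), z], ![0, 0]]) := by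
    simp only [Set.mem_insert_iff, Set.mem_range, not_or, not_exists]
    refine ⟨?_, ?_⟩
    · rw [e12_eq']
      intro h'
      have := congrFun (congrFun h' 0) 1
      simp at this
    · intro z h'
      rw [e12_eq'] at h'
      have := congrFun (congrFun h' 0) 0
      simp at this
  have h1nm : (1 : Matrix (Fin 2) (Fin 2) F)
      ∉ insert (Matrix.single 0 1 (1 : F))
          (insert 0 (Set.range fun z : F => Matrix.of ![![(1 : F), z], ![0, 0]])) := by
    simp only [Set.mem_insert_iff, Set.mem_range, not_or, not_exists]
    refine ⟨?_, ?_, ?_⟩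
    · rw [e12_eq']
      intro h'
      have := congrFun (congrFun h' 0) 0
      simp [Matrix.one_apply] at this
    · exact one_ne_zero
    · intro z h'
      have := congrFun (congrFun h' 1) 1
      simp [Matrix.one_apply] at this
  have hrange : (Set.range fun z : F => Matrix.of ![![(1 : F), z], ![0, 0]]).ncard
      = Fintype.card F := by
    rw [← Nat.card_coe_set_eq, Nat.card_range_of_injective Minj,
      Nat.card_eq_fintype_card]
  rw [hR, Set.ncard_insert_of_notMem h1nm, Set.ncard_insert_of_notMem hEnm,
    Set.ncard_insert_of_notMem h0nm, hrange]
end
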